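/- arXiv:2307.03064 — 7 statements merged into one kernel-verified Lean document; each statement's English description precedes it below -/
import Mathlib

section
/- Every positive semidefinite block matrix [[A, X],[X*, B]] in M_{n+m}(ℂ) (with A ∈ M_n, B ∈ M_m) can be decomposed as U (A ⊕ 0) U* + V (0 ⊕ B) V* for some unitary matrices U, V ∈ M_{n+m}(ℂ). -/
open Matrix ComplexOrder

section Aux
open Polynomial
set_option linter.unusedSectionVars false


variable {k : Type*} [Fintype k] [DecidableEq k]



lemma eval_charpoly (M : Matrix k k ℂ) (z : ℂ) :
    (M.charpoly).eval z = (z • (1 : Matrix k k ℂ) - M).det := by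
  rw [Matrix.charpoly, ← Polynomial.coe_evalRingHom, RingHom.map_det]
  congr 1
  ext i j
  by_cases hij : i = j
  · subst hij; simp [charmatrix_apply_eq, Matrix.one_apply]
  · simp [charmatrix_apply_ne _ _ _ hij, Matrix.one_apply_ne hij]

lemma charpoly_eq_of_eval_ne_zero {M N : Matrix k k ℂ}
    (h : ∀ z : ℂ, z ≠ 0 → (M.charpoly).eval z = (N.charpoly).eval z) :
    M.charpoly = N.charpoly := by
  apply Polynomial.eq_of_infinite_eval_eq
  apply Set.Infinite.mono (s := {(0 : ℂ)}ᶜ)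
  · intro z hz; exact h z hz
  · exact (Set.finite_singleton 0).infinite_compl

lemma charpoly_mul_conjTranspose_comm (T : Matrix k k ℂ) :
    (T * Tᴴ).charpoly = (Tᴴ * T).charpoly := by
  apply charpoly_eq_of_eval_ne_zero
  intro z hz
  rw [_root_.eval_charpoly, _root_.eval_charpoly]
  have h1 : z • (1 : Matrix k k ℂ) - T * Tᴴ = z • ((1 : Matrix k k ℂ) - (z⁻¹ • T) * Tᴴ) := by
    rw [smul_sub, Matrix.smul_mul, smul_smul, mul_inv_cancel₀ hz, one_smul]
  have h2 : z • (1 : Matrix k k ℂ) - Tᴴ * T = z • ((1 : Matrix k k ℂ) - Tᴴ * (z⁻¹ • T)) := by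
    rw [smul_sub, Matrix.mul_smul, smul_smul, mul_inv_cancel₀ hz, one_smul]
  rw [h1, h2, det_smul, det_smul, Matrix.det_one_sub_mul_comm]

lemma charpoly_unitary_conj {U : Matrix k k ℂ} (hU : U ∈ Matrix.unitaryGroup k ℂ)
    (M : Matrix k k ℂ) : (U * M * Uᴴ).charpoly = M.charpoly := by
  apply charpoly_eq_of_eval_ne_zero
  intro z _
  rw [_root_.eval_charpoly, _root_.eval_charpoly]
  have hUU : U * Uᴴ = 1 := Matrix.mem_unitaryGroup_iff.mp hU
  have : z • (1 : Matrix k k ℂ) - U * M * Uᴴ = U * (z • (1 : Matrix k k ℂ) - M) * Uᴴ := by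
    rw [Matrix.mul_sub, Matrix.sub_mul, Matrix.mul_smul, Matrix.mul_one, Matrix.smul_mul, hUU]
  have hUU' : Uᴴ * U = 1 := Matrix.mem_unitaryGroup_iff'.mp hU
  rw [this, det_mul, det_mul, mul_comm, ← mul_assoc, ← det_mul, hUU', det_one, one_mul]

lemma charpoly_diagonal (d : k → ℂ) :
    (Matrix.diagonal d).charpoly =
      (Multiset.map (fun a => X - C a) (Multiset.map d Finset.univ.val)).prod := by
  apply Polynomial.eq_of_infinite_eval_eq
  apply Set.Infinite.mono (s := Set.univ)
  · rintro z -
    show _ = _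
    rw [_root_.eval_charpoly, Polynomial.eval_multiset_prod]
    have : z • (1 : Matrix k k ℂ) - Matrix.diagonal d = Matrix.diagonal (fun i => z - d i) := by
      ext i j
      by_cases hij : i = j
      · subst hij; simp
      · simp [Matrix.diagonal_apply_ne _ hij, Matrix.one_apply_ne hij]
    rw [this, det_diagonal, Multiset.map_map, Multiset.map_map, Finset.prod]
    congr 1
    apply Multiset.map_congr rfl
    intro x _
    simp
  · exact Set.infinite_univ


lemma exists_perm_comp_eq {α : Type*} {f g : k → α} [DecidableEq α]
    (h : Multiset.map f Finset.univ.val = Multiset.map g Finset.univ.val) :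
    ∃ σ : Equiv.Perm k, f ∘ σ = g := by
  have hc : ∀ c, Fintype.card {a // g a = c} = Fintype.card {a // f a = c} := by
    intro c
    have := congrArg (Multiset.count c) h
    rw [Multiset.count_map, Multiset.count_map] at this
    simp only [Fintype.card_subtype]
    rw [Finset.card_filter, Finset.card_filter] at *
    rw [← Finset.filter_val, ← Finset.filter_val, Finset.card_val, Finset.card_val] at this
    simpa [eq_comm, Finset.sum_boole] using this.symm
  refine ⟨Equiv.ofFiberEquiv (f := g) (g := f) (fun c => Fintype.equivOfCardEq (hc c)), ?_⟩
  funext a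
  exact Equiv.ofFiberEquiv_map (fun c => Fintype.equivOfCardEq (hc c)) a


-- permutation matrix facts
noncomputable def permMat (σ : Equiv.Perm k) : Matrix k k ℂ := σ.toPEquiv.toMatrix

lemma permMat_conjTranspose (σ : Equiv.Perm k) : (permMat σ)ᴴ = permMat σ.symm := by
  ext i j
  simp only [permMat, conjTranspose_apply, PEquiv.toMatrix_toPEquiv_eq]
  rw [Matrix.submatrix_apply, Matrix.submatrix_apply, id_eq, id_eq, Matrix.one_apply, Matrix.one_apply]
  simp only [Equiv.symm_apply_eq, eq_comm (a := σ j)]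
  split <;> simp_all [Equiv.symm_apply_eq]

lemma permMat_mem_unitary (σ : Equiv.Perm k) : permMat σ ∈ Matrix.unitaryGroup k ℂ := by
  rw [Matrix.mem_unitaryGroup_iff]
  show permMat σ * star (permMat σ) = 1
  rw [Matrix.star_eq_conjTranspose, permMat_conjTranspose, permMat, permMat,
    PEquiv.toMatrix_toPEquiv_mul]
  ext i j
  simp only [Matrix.submatrix_apply, PEquiv.toMatrix_apply, Equiv.toPEquiv_apply,
    Matrix.one_apply, id_eq, Option.mem_def, Option.some.injEq]
  simp [Equiv.symm_apply_eq, eq_comm]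

lemma permMat_conj_diagonal (σ : Equiv.Perm k) (d : k → ℂ) :
    permMat σ * Matrix.diagonal d * (permMat σ)ᴴ = Matrix.diagonal (d ∘ σ) := by
  rw [permMat_conjTranspose, permMat, permMat, PEquiv.toMatrix_toPEquiv_mul,
    PEquiv.mul_toMatrix_toPEquiv]
  simp [Matrix.submatrix_diagonal_equiv]

lemma isHermitian_unitary_conj_of_charpoly_eq {H1 H2 : Matrix k k ℂ}
    (h1 : H1.IsHermitian) (h2 : H2.IsHermitian) (hc : H1.charpoly = H2.charpoly) :
    ∃ U ∈ Matrix.unitaryGroup k ℂ, H1 = U * H2 * Uᴴ := by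
  set U1 : Matrix k k ℂ := h1.eigenvectorUnitary.1 with hU1def
  set U2 : Matrix k k ℂ := h2.eigenvectorUnitary.1 with hU2def
  have hU1 : U1 ∈ Matrix.unitaryGroup k ℂ := h1.eigenvectorUnitary.2
  have hU2 : U2 ∈ Matrix.unitaryGroup k ℂ := h2.eigenvectorUnitary.2
  set d1 : k → ℂ := RCLike.ofReal ∘ h1.eigenvalues with hd1def
  set d2 : k → ℂ := RCLike.ofReal ∘ h2.eigenvalues with hd2def
  have hs1 : H1 = U1 * Matrix.diagonal d1 * U1ᴴ := by
    exact h1.spectral_theorem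
  have hs2 : H2 = U2 * Matrix.diagonal d2 * U2ᴴ := by
    exact h2.spectral_theorem
  -- equal eigenvalue multisets
  have hcd : (Matrix.diagonal d1).charpoly = (Matrix.diagonal d2).charpoly := by
    rw [← charpoly_unitary_conj hU1 (Matrix.diagonal d1),
      ← charpoly_unitary_conj hU2 (Matrix.diagonal d2), ← hs1, ← hs2, hc]
  have hmult : Multiset.map d1 Finset.univ.val = Multiset.map d2 Finset.univ.val := by
    have := congrArg Polynomial.roots hcd
    rwa [_root_.charpoly_diagonal, _root_.charpoly_diagonal, Polynomial.roots_multiset_prod_X_sub_C,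
      Polynomial.roots_multiset_prod_X_sub_C] at this
  obtain ⟨σ, hσ⟩ := exists_perm_comp_eq hmult.symm
  -- d2 ∘ σ = d1
  refine ⟨U1 * permMat σ * U2ᴴ, ?_, ?_⟩
  · exact mul_mem (mul_mem hU1 (permMat_mem_unitary σ)) (Unitary.star_mem hU2)
  · have hDD : permMat σ * Matrix.diagonal d2 * (permMat σ)ᴴ = Matrix.diagonal d1 := by
      rw [permMat_conj_diagonal, hσ]
    calc H1 = U1 * Matrix.diagonal d1 * U1ᴴ := hs1
      _ = U1 * (permMat σ * Matrix.diagonal d2 * (permMat σ)ᴴ) * U1ᴴ := by rw [hDD]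
      _ = U1 * permMat σ * U2ᴴ * (U2 * Matrix.diagonal d2 * U2ᴴ) * (U1 * permMat σ * U2ᴴ)ᴴ := by
          have h22 : U2ᴴ * U2 = 1 := Matrix.mem_unitaryGroup_iff'.mp hU2
          have hcancel : ∀ Z : Matrix k k ℂ, U2ᴴ * (U2 * Z) = Z := fun Z => by
            rw [← Matrix.mul_assoc, h22, Matrix.one_mul]
          simp only [Matrix.conjTranspose_mul, Matrix.conjTranspose_conjTranspose,
            Matrix.mul_assoc, hcancel]
      _ = U1 * permMat σ * U2ᴴ * H2 * (U1 * permMat σ * U2ᴴ)ᴴ := by rw [← hs2]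

lemma exists_unitary_mul_conjTranspose_self (T : Matrix k k ℂ) :
    ∃ U ∈ Matrix.unitaryGroup k ℂ, T * Tᴴ = U * (Tᴴ * T) * Uᴴ :=
  isHermitian_unitary_conj_of_charpoly_eq (isHermitian_mul_conjTranspose_self T)
    (isHermitian_conjTranspose_mul_self T) (charpoly_mul_conjTranspose_comm T)

end Aux

/-- **Decomposition of positive block matrices (Bourin–Lee).** Every positive
semidefinite block matrix `[[A, X],[X*, B]]` decomposes as
`U (A ⊕ 0) U* + V (0 ⊕ B) V*` for some unitaries `U, V`. -/
theorem posSemidef_block_decomposition {n m : ℕ}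
    {A : Matrix (Fin n) (Fin n) ℂ} {B : Matrix (Fin m) (Fin m) ℂ}
    {X : Matrix (Fin n) (Fin m) ℂ}
    (h : (Matrix.fromBlocks A X Xᴴ B).PosSemidef) :
    ∃ U V : Matrix (Fin n ⊕ Fin m) (Fin n ⊕ Fin m) ℂ,
      U ∈ Matrix.unitaryGroup (Fin n ⊕ Fin m) ℂ ∧
      V ∈ Matrix.unitaryGroup (Fin n ⊕ Fin m) ℂ ∧
      Matrix.fromBlocks A X Xᴴ B =
        U * Matrix.fromBlocks A 0 0 0 * Uᴴ + V * Matrix.fromBlocks 0 0 0 B * Vᴴ := by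
  have key := fun (T : Matrix (Fin n ⊕ Fin m) (Fin n ⊕ Fin m) ℂ) =>
    exists_unitary_mul_conjTranspose_self T

  open scoped MatrixOrder in
  set S := CFC.sqrt (Matrix.fromBlocks A X Xᴴ B) with hSdef
  open scoped MatrixOrder in
  have hSS : S * S = Matrix.fromBlocks A X Xᴴ B := CFC.sqrt_mul_sqrt_self _ h.nonneg
  open scoped MatrixOrder in
  have hSH : Sᴴ = S := (CFC.sqrt_nonneg _).posSemidef.1
  set E1 : Matrix (Fin n ⊕ Fin m) (Fin n ⊕ Fin m) ℂ := Matrix.fromBlocks 1 0 0 0 with hE1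
  set E2 : Matrix (Fin n ⊕ Fin m) (Fin n ⊕ Fin m) ℂ := Matrix.fromBlocks 0 0 0 1 with hE2
  have hE1H : E1ᴴ = E1 := by simp [hE1, Matrix.fromBlocks_conjTranspose]
  have hE2H : E2ᴴ = E2 := by simp [hE2, Matrix.fromBlocks_conjTranspose]
  have hE1sq : E1 * E1 = E1 := by simp [hE1, Matrix.fromBlocks_multiply]
  have hE2sq : E2 * E2 = E2 := by simp [hE2, Matrix.fromBlocks_multiply]
  have hsum : E1 + E2 = 1 := by
    rw [hE1, hE2, ← Matrix.fromBlocks_one]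
    simp [Matrix.fromBlocks_add]
  set T1 := S * E1 with hT1
  set T2 := S * E2 with hT2
  have hT1H : T1ᴴ = E1 * S := by rw [hT1, Matrix.conjTranspose_mul, hE1H, hSH]
  have hT2H : T2ᴴ = E2 * S := by rw [hT2, Matrix.conjTranspose_mul, hE2H, hSH]
  have hTT1 : T1ᴴ * T1 = Matrix.fromBlocks A 0 0 0 := by
    rw [hT1H, hT1, Matrix.mul_assoc, ← Matrix.mul_assoc S S E1, hSS, ← Matrix.mul_assoc]
    rw [hE1, Matrix.fromBlocks_multiply, Matrix.fromBlocks_multiply]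
    simp
  have hTT2 : T2ᴴ * T2 = Matrix.fromBlocks 0 0 0 B := by
    rw [hT2H, hT2, Matrix.mul_assoc, ← Matrix.mul_assoc S S E2, hSS, ← Matrix.mul_assoc]
    rw [hE2, Matrix.fromBlocks_multiply, Matrix.fromBlocks_multiply]
    simp
  have hsumM : T1 * T1ᴴ + T2 * T2ᴴ = Matrix.fromBlocks A X Xᴴ B := by
    rw [hT1H, hT2H, hT1, hT2, Matrix.mul_assoc, ← Matrix.mul_assoc E1 E1 S, hE1sq,
      Matrix.mul_assoc, ← Matrix.mul_assoc E2 E2 S, hE2sq, ← Matrix.mul_add, ← Matrix.add_mul,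
      hsum, Matrix.one_mul, hSS]
  obtain ⟨U, hU, hU2⟩ := key T1
  obtain ⟨V, hV, hV2⟩ := key T2
  exact ⟨U, V, hU, hV, by rw [← hsumM, hU2, hV2, hTT1, hTT2]⟩
end

section
/- Let [[A, X],[X*, B]] ∈ M_{2n}(ℂ) be positive semidefinite with all four blocks in M_n. Then there exist unitaries U, V ∈ M_{2n}(ℂ) such that [[A, X],[X*, B]] = U ((A+B)/2 + Re X) ⊕ 0) U* + V (0 ⊕ ((A+B)/2 − Re X)) V*, where Re X = (X + X*)/2. -/
open Matrix ComplexOrder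
open scoped InnerProductSpace
open scoped MatrixOrder

lemma toEuclideanLin_mul {m : Type*} [Fintype m] [DecidableEq m]
    (P Q : Matrix m m ℂ) :
    Matrix.toEuclideanLin (P * Q) =
      (Matrix.toEuclideanLin P) ∘ₗ (Matrix.toEuclideanLin Q) := by
  rw [Matrix.toEuclideanLin_eq_toLin, Matrix.toLin_mul _ (PiLp.basisFun 2 ℂ m) _]

lemma gram_eq_exists_unitary {m : Type*} [Fintype m] [DecidableEq m]
    {F G : Matrix m m ℂ} (hFG : Fᴴ * F = Gᴴ * G) :
    ∃ U ∈ Matrix.unitaryGroup m ℂ, F = U * G := by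
  set V := EuclideanSpace ℂ m
  set f := Matrix.toEuclideanLin F with hf
  set g := Matrix.toEuclideanLin G with hg
  have hadj : (LinearMap.adjoint f) ∘ₗ f = (LinearMap.adjoint g) ∘ₗ g := by
    rw [← Matrix.toEuclideanLin_conjTranspose_eq_adjoint,
      ← Matrix.toEuclideanLin_conjTranspose_eq_adjoint, hf, hg,
      ← toEuclideanLin_mul, ← toEuclideanLin_mul, hFG]
  have hinner : ∀ x y : V, ⟪f x, f y⟫_ℂ = ⟪g x, g y⟫_ℂ := by
    intro x y
    rw [← LinearMap.adjoint_inner_right f, ← LinearMap.adjoint_inner_right g]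
    simp only [← LinearMap.comp_apply, hadj]
  have hnorm : ∀ x : V, ‖f x‖ = ‖g x‖ := by
    intro x
    have h1 := hinner x x
    rw [inner_self_eq_norm_sq_to_K, inner_self_eq_norm_sq_to_K] at h1
    have h2 : (‖f x‖ : ℝ) ^ 2 = ‖g x‖ ^ 2 := by exact_mod_cast h1
    nlinarith [norm_nonneg (f x), norm_nonneg (g x)]
  have hker : LinearMap.ker g ≤ LinearMap.ker f := by
    intro x hx
    rw [LinearMap.mem_ker] at hx ⊢
    have := hnorm x
    rw [hx, norm_zero, norm_eq_zero] at this
    exact this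
  set S := LinearMap.range g with hS
  set h : S →ₗ[ℂ] V :=
    ((LinearMap.ker g).liftQ f hker) ∘ₗ (g.quotKerEquivRange.symm : S →ₗ[ℂ] _) with hh
  have hhx : ∀ x : V, h ⟨g x, LinearMap.mem_range_self g x⟩ = f x := by
    intro x
    simp only [hh, LinearMap.comp_apply, LinearEquiv.coe_coe,
      LinearMap.quotKerEquivRange_symm_apply_image g x]
    simp [Submodule.mkQ_apply]
  set L : S →ₗᵢ[ℂ] V :=
    { toLinearMap := h
      norm_map' := by
        rintro ⟨s, x, rfl⟩
        rw [hhx x]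
        exact (hnorm x).trans rfl } with hL
  set W := L.extend with hW
  have hWg : ∀ x : V, W (g x) = f x := by
    intro x
    have := L.extend_apply ⟨g x, LinearMap.mem_range_self g x⟩
    rw [← hW] at this
    rw [show (g x) = ((⟨g x, LinearMap.mem_range_self g x⟩ : S) : V) from rfl, this]
    exact hhx x
  set U := Matrix.toEuclideanLin.symm W.toLinearMap with hU
  have hUW : Matrix.toEuclideanLin U = W.toLinearMap := Matrix.toEuclideanLin.apply_symm_apply _
  have hone : Matrix.toEuclideanLin (1 : Matrix m m ℂ) = LinearMap.id := by
    rw [Matrix.toEuclideanLin_eq_toLin, Matrix.toLin_one]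
  have hUmem : U ∈ Matrix.unitaryGroup m ℂ := by
    rw [Matrix.mem_unitaryGroup_iff']
    apply Matrix.toEuclideanLin.injective
    rw [Matrix.star_eq_conjTranspose, toEuclideanLin_mul,
      Matrix.toEuclideanLin_conjTranspose_eq_adjoint, hUW, hone]
    apply LinearMap.ext
    intro x
    apply ext_inner_right ℂ
    intro y
    rw [LinearMap.comp_apply, LinearMap.adjoint_inner_left]
    simp [W.inner_map_map]
  refine ⟨U, hUmem, ?_⟩
  apply Matrix.toEuclideanLin.injective
  rw [toEuclideanLin_mul, hUW, ← hf, ← hg]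
  apply LinearMap.ext
  intro x
  exact (hWg x).symm

/-- **Decomposition with the real part of the off-diagonal block (Bourin–Lee–Lin).**
A positive semidefinite `[[A, X],[X*, B]]` with blocks in `M_n` equals
`U (((A+B)/2 + Re X) ⊕ 0) U* + V (0 ⊕ ((A+B)/2 − Re X)) V*` for some
unitaries `U, V`, where `Re X = (X + X*)/2`. -/
theorem posSemidef_block_decomposition_re {n : ℕ}
    {A B X : Matrix (Fin n) (Fin n) ℂ}
    (h : (Matrix.fromBlocks A X Xᴴ B).PosSemidef) :
    ∃ U V : Matrix (Fin n ⊕ Fin n) (Fin n ⊕ Fin n) ℂ,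
      U ∈ Matrix.unitaryGroup (Fin n ⊕ Fin n) ℂ ∧
      V ∈ Matrix.unitaryGroup (Fin n ⊕ Fin n) ℂ ∧
      Matrix.fromBlocks A X Xᴴ B =
        U * Matrix.fromBlocks ((1 / 2 : ℂ) • (A + B) + (1 / 2 : ℂ) • (X + Xᴴ)) 0 0 0 * Uᴴ +
        V * Matrix.fromBlocks 0 0 0 ((1 / 2 : ℂ) • (A + B) - (1 / 2 : ℂ) • (X + Xᴴ)) * Vᴴ := by
  classical
  set M := Matrix.fromBlocks A X Xᴴ B with hM
  set s : ℝ := (Real.sqrt 2)⁻¹ with hs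
  set R : Matrix (Fin n ⊕ Fin n) (Fin n ⊕ Fin n) ℂ :=
    (s : ℂ) • Matrix.fromBlocks 1 (-1) 1 1 with hR
  have hstars : star (s : ℂ) = (s : ℂ) := by
    simp [Complex.star_def, Complex.conj_ofReal]
  have hs2 : (s : ℂ) * (s : ℂ) = 1 / 2 := by
    have h2 : s * s = 1 / 2 := by
      rw [hs, ← mul_inv, Real.mul_self_sqrt (by norm_num)]
      norm_num
    rw [← Complex.ofReal_mul, h2]
    norm_num
  have hRH : Rᴴ = (s : ℂ) • Matrix.fromBlocks 1 1 (-1) 1 := by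
    rw [hR, Matrix.conjTranspose_smul, hstars, Matrix.fromBlocks_conjTranspose]
    simp
  have hprodU : (Matrix.fromBlocks 1 1 (-1) 1 : Matrix (Fin n ⊕ Fin n) (Fin n ⊕ Fin n) ℂ) *
      Matrix.fromBlocks 1 (-1) 1 1 = (2 : ℂ) • 1 := by
    rw [Matrix.fromBlocks_multiply, ← Matrix.fromBlocks_one, Matrix.fromBlocks_smul,
      Matrix.fromBlocks_inj]
    refine ⟨?_, ?_, ?_, ?_⟩
    · simp [two_smul]
    · simp
    · simp
    · simp [two_smul]
  have hRmem : R ∈ Matrix.unitaryGroup (Fin n ⊕ Fin n) ℂ := by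
    rw [Matrix.mem_unitaryGroup_iff', Matrix.star_eq_conjTranspose, hRH, hR,
      smul_mul_assoc, mul_smul_comm, smul_smul, hs2, hprodU, smul_smul]
    norm_num
  have hR1 : R * Rᴴ = 1 := by
    have := Matrix.mem_unitaryGroup_iff.mp hRmem
    rwa [Matrix.star_eq_conjTranspose] at this
  set P : Matrix (Fin n) (Fin n) ℂ := (1 / 2 : ℂ) • (A + B) + (1 / 2 : ℂ) • (X + Xᴴ) with hP
  set Q : Matrix (Fin n) (Fin n) ℂ := (1 / 2 : ℂ) • (A + B) - (1 / 2 : ℂ) • (X + Xᴴ) with hQ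
  set Y : Matrix (Fin n) (Fin n) ℂ := (1 / 2 : ℂ) • (X + B - A - Xᴴ) with hY
  set Z : Matrix (Fin n) (Fin n) ℂ := (1 / 2 : ℂ) • (Xᴴ + B - A - X) with hZ
  have hprodM : (Matrix.fromBlocks 1 1 (-1) 1 : Matrix (Fin n ⊕ Fin n) (Fin n ⊕ Fin n) ℂ) *
      M * Matrix.fromBlocks 1 (-1) 1 1 =
      Matrix.fromBlocks (A + B + X + Xᴴ) (X + B - A - Xᴴ) (Xᴴ + B - A - X) (A + B - X - Xᴴ) := by
    rw [hM, Matrix.fromBlocks_multiply, Matrix.fromBlocks_multiply, Matrix.fromBlocks_inj]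
    refine ⟨by noncomm_ring, by noncomm_ring, by noncomm_ring, by noncomm_ring⟩
  set N : Matrix (Fin n ⊕ Fin n) (Fin n ⊕ Fin n) ℂ := Rᴴ * M * R with hN
  have hNblocks : N = Matrix.fromBlocks P Y Z Q := by
    rw [hN, hRH, hR, smul_mul_assoc, smul_mul_assoc, mul_smul_comm, smul_smul, hs2, hprodM,
      Matrix.fromBlocks_smul, Matrix.fromBlocks_inj]
    exact ⟨by module, by module, by module, by module⟩
  have hNpsd : N.PosSemidef := h.conjTranspose_mul_mul_same R
  set C : Matrix (Fin n ⊕ Fin n) (Fin n ⊕ Fin n) ℂ := CFC.sqrt N with hC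
  have hCC : C * C = N := CFC.sqrt_mul_sqrt_self N hNpsd.nonneg
  have hCH : Cᴴ = C := (CFC.sqrt_nonneg N).posSemidef.isHermitian
  set E1 : Matrix (Fin n ⊕ Fin n) (Fin n ⊕ Fin n) ℂ := Matrix.fromBlocks 1 0 0 0 with hE1
  set E2 : Matrix (Fin n ⊕ Fin n) (Fin n ⊕ Fin n) ℂ := Matrix.fromBlocks 0 0 0 1 with hE2
  have hE1H : E1ᴴ = E1 := by rw [hE1, Matrix.fromBlocks_conjTranspose]; simp
  have hE2H : E2ᴴ = E2 := by rw [hE2, Matrix.fromBlocks_conjTranspose]; simp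
  have hE11 : E1 * E1 = E1 := by rw [hE1, Matrix.fromBlocks_multiply]; simp
  have hE22 : E2 * E2 = E2 := by rw [hE2, Matrix.fromBlocks_multiply]; simp
  have hE12 : E1 + E2 = 1 := by
    rw [hE1, hE2, Matrix.fromBlocks_add, ← Matrix.fromBlocks_one]
    simp
  set D1 : Matrix (Fin n ⊕ Fin n) (Fin n ⊕ Fin n) ℂ := Matrix.fromBlocks P 0 0 0 with hD1
  set D2 : Matrix (Fin n ⊕ Fin n) (Fin n ⊕ Fin n) ℂ := Matrix.fromBlocks 0 0 0 Q with hD2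
  have hE1NE1 : E1 * N * E1 = D1 := by
    rw [hNblocks, hE1, hD1, Matrix.fromBlocks_multiply, Matrix.fromBlocks_multiply,
      Matrix.fromBlocks_inj]
    refine ⟨by noncomm_ring, by noncomm_ring, by noncomm_ring, by noncomm_ring⟩
  have hE2NE2 : E2 * N * E2 = D2 := by
    rw [hNblocks, hE2, hD2, Matrix.fromBlocks_multiply, Matrix.fromBlocks_multiply,
      Matrix.fromBlocks_inj]
    refine ⟨by noncomm_ring, by noncomm_ring, by noncomm_ring, by noncomm_ring⟩
  -- decompose each diagonal compression
  have key : ∀ (E D : Matrix (Fin n ⊕ Fin n) (Fin n ⊕ Fin n) ℂ), Eᴴ = E → E * E = E →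
      E * N * E = D → ∃ U ∈ Matrix.unitaryGroup (Fin n ⊕ Fin n) ℂ,
        C * E * C = U * D * Uᴴ := by
    intro E D hEH hEE hEND
    have hFgram : (C * E)ᴴ * (C * E) = D := by
      rw [Matrix.conjTranspose_mul, hCH, hEH, Matrix.mul_assoc, ← Matrix.mul_assoc C C E,
        hCC, ← Matrix.mul_assoc, hEND]
    have hDpsd : D.PosSemidef := hFgram ▸ Matrix.posSemidef_conjTranspose_mul_self (C * E)
    have hGG : CFC.sqrt D * CFC.sqrt D = D := CFC.sqrt_mul_sqrt_self D hDpsd.nonneg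
    have hGH : (CFC.sqrt D)ᴴ = CFC.sqrt D := (CFC.sqrt_nonneg D).posSemidef.isHermitian
    have hgram : (C * E)ᴴ * (C * E) = (CFC.sqrt D)ᴴ * CFC.sqrt D := by
      rw [hFgram, hGH, hGG]
    obtain ⟨U, hUmem, hU⟩ := gram_eq_exists_unitary hgram
    refine ⟨U, hUmem, ?_⟩
    have : C * E * (C * E)ᴴ = U * D * Uᴴ := by
      rw [hU, Matrix.conjTranspose_mul, ← Matrix.mul_assoc, Matrix.mul_assoc U _ _,
        hGH, hGG]
    rw [← this, Matrix.conjTranspose_mul, hCH, hEH, ← Matrix.mul_assoc,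
      Matrix.mul_assoc _ E E, hEE]
  obtain ⟨U1, hU1mem, hU1⟩ := key E1 D1 hE1H hE11 hE1NE1
  obtain ⟨U2, hU2mem, hU2⟩ := key E2 D2 hE2H hE22 hE2NE2
  have hsum : C * E1 * C + C * E2 * C = N := by
    rw [Matrix.mul_assoc, Matrix.mul_assoc, ← Matrix.mul_add, ← Matrix.add_mul, hE12,
      Matrix.one_mul, hCC]
  have hMN : M = R * N * Rᴴ := by
    rw [hN, ← Matrix.mul_assoc, ← Matrix.mul_assoc, hR1, Matrix.one_mul, Matrix.mul_assoc,
      hR1, Matrix.mul_one]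
  refine ⟨R * U1, R * U2, mul_mem hRmem hU1mem, mul_mem hRmem hU2mem, ?_⟩
  calc M = R * N * Rᴴ := hMN
    _ = R * (C * E1 * C) * Rᴴ + R * (C * E2 * C) * Rᴴ := by
        rw [← hsum]; noncomm_ring
    _ = R * U1 * D1 * (R * U1)ᴴ + R * U2 * D2 * (R * U2)ᴴ := by
        rw [hU1, hU2, Matrix.conjTranspose_mul, Matrix.conjTranspose_mul]; noncomm_ring
end

section
/- Let f be a nonnegative concave function on [0,∞) and let [[A, X],[X*, B]] be a positive semidefinite block matrix with A ∈ M_n^+, B ∈ M_m^+. Then for every unitarily invariant norm, ‖f([[A, X],[X*, B]])‖ ≤ ‖f(A)‖ + ‖f(B)‖. -/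
open Matrix ComplexOrder

namespace BLAux

set_option linter.unusedSectionVars false

variable {ι : Type*} [Fintype ι] [DecidableEq ι]

/-- Spectral representation with eigenvalue tuple `d` read along an indexing `κ`. -/
def HasSpec {NN : ℕ} (κ : ι ≃ Fin NN) (M : Matrix ι ι ℂ) (d : Fin NN → ℝ) : Prop :=
  ∃ W : Matrix ι ι ℂ, W ∈ Matrix.unitaryGroup ι ℂ ∧
    M = W * Matrix.diagonal (fun i => (d (κ i) : ℂ)) * Wᴴ

lemma unit_star_mul {W : Matrix ι ι ℂ} (hW : W ∈ Matrix.unitaryGroup ι ℂ) :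
    Wᴴ * W = 1 := by
  simpa [Matrix.star_eq_conjTranspose] using Matrix.mem_unitaryGroup_iff'.mp hW

lemma unit_mul_star {W : Matrix ι ι ℂ} (hW : W ∈ Matrix.unitaryGroup ι ℂ) :
    W * Wᴴ = 1 := by
  simpa [Matrix.star_eq_conjTranspose] using Matrix.mem_unitaryGroup_iff.mp hW

lemma unit_star_mem {W : Matrix ι ι ℂ} (hW : W ∈ Matrix.unitaryGroup ι ℂ) :
    Wᴴ ∈ Matrix.unitaryGroup ι ℂ := by
  simpa [Matrix.star_eq_conjTranspose] using Unitary.star_mem hW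

lemma one_mem_unit : (1 : Matrix ι ι ℂ) ∈ Matrix.unitaryGroup ι ℂ := by
  rw [Matrix.mem_unitaryGroup_iff]; simp

lemma dot_star_self (x : ι → ℂ) :
    star x ⬝ᵥ x = ((∑ i, Complex.normSq (x i) : ℝ) : ℂ) := by
  rw [dotProduct]
  push_cast
  refine Finset.sum_congr rfl fun i _ => ?_
  rw [Pi.star_apply]
  rw [Complex.star_def, ← Complex.normSq_eq_conj_mul_self]

lemma dot_star_self_nonneg_zero {x : ι → ℂ} (h : (∑ i, Complex.normSq (x i) : ℝ) = 0) :
    x = 0 := by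
  funext i
  have hterm : ∀ j ∈ Finset.univ, (0:ℝ) ≤ Complex.normSq (x j) := fun j _ => Complex.normSq_nonneg _
  have := (Finset.sum_eq_zero_iff_of_nonneg hterm).mp h i (Finset.mem_univ i)
  simpa using (Complex.normSq_eq_zero.mp this)

lemma mulVec_unit_dot {W : Matrix ι ι ℂ} (hW : W ∈ Matrix.unitaryGroup ι ℂ) (c : ι → ℂ) :
    star (W *ᵥ c) ⬝ᵥ (W *ᵥ c) = star c ⬝ᵥ c := by
  rw [Matrix.star_mulVec, Matrix.dotProduct_mulVec, Matrix.vecMul_vecMul,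
    unit_star_mul hW, Matrix.vecMul_one]

lemma vecMul_diag_dot (c : ι → ℂ) (v : ι → ℂ) :
    (star c ᵥ* Matrix.diagonal v) ⬝ᵥ c = ∑ i, v i * (star (c i) * c i) := by
  rw [dotProduct]
  refine Finset.sum_congr rfl fun i _ => ?_
  rw [Matrix.vecMul_diagonal, Pi.star_apply]
  ring

lemma qf_diag {W : Matrix ι ι ℂ} (hW : W ∈ Matrix.unitaryGroup ι ℂ) (r : ι → ℝ) (c : ι → ℂ) :
    star (W *ᵥ c) ⬝ᵥ ((W * Matrix.diagonal (fun i => (r i : ℂ)) * Wᴴ) *ᵥ (W *ᵥ c))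
      = ((∑ i, r i * Complex.normSq (c i) : ℝ) : ℂ) := by
  rw [Matrix.mulVec_mulVec, Matrix.star_mulVec, Matrix.dotProduct_mulVec,
    Matrix.vecMul_vecMul]
  have key : Wᴴ * (W * Matrix.diagonal (fun i => (r i : ℂ)) * Wᴴ * W)
      = Matrix.diagonal (fun i => (r i : ℂ)) := by
    rw [Matrix.mul_assoc (W * _), unit_star_mul hW, Matrix.mul_one, ← Matrix.mul_assoc,
      unit_star_mul hW, Matrix.one_mul]
  rw [key, vecMul_diag_dot]
  push_cast
  refine Finset.sum_congr rfl fun i _ => ?_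
  rw [Complex.star_def, ← Complex.normSq_eq_conj_mul_self]

lemma dot_AhA (A : Matrix ι ι ℂ) (x : ι → ℂ) :
    star x ⬝ᵥ ((Aᴴ * A) *ᵥ x) = star (A *ᵥ x) ⬝ᵥ (A *ᵥ x) := by
  conv_lhs => rw [Matrix.dotProduct_mulVec]
  conv_rhs => rw [Matrix.star_mulVec, Matrix.dotProduct_mulVec, Matrix.vecMul_vecMul]


def lowEquiv {NN : ℕ} (j : Fin NN) : {k : Fin NN // k ≤ j} ≃ Fin (j.1 + 1) where
  toFun x := ⟨x.1.1, Nat.lt_succ_of_le x.2⟩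
  invFun a := ⟨⟨a.1, lt_of_le_of_lt (Nat.le_of_lt_succ a.2) j.2⟩, by
    simpa [Fin.le_def] using Nat.le_of_lt_succ a.2⟩
  left_inv x := by ext; rfl
  right_inv a := rfl

def strictEquiv {NN : ℕ} (j : Fin NN) : {k : Fin NN // k < j} ≃ Fin j.1 where
  toFun x := ⟨x.1.1, x.2⟩
  invFun a := ⟨⟨a.1, a.2.trans j.2⟩, by simpa [Fin.lt_def] using a.2⟩
  left_inv x := by ext; rfl
  right_inv a := rfl

lemma cf_le {NN : ℕ} (κ : ι ≃ Fin NN) {M : Matrix ι ι ℂ} {d' : Fin NN → ℝ}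
    (hd' : Antitone d') (hspec : HasSpec κ M d') (j : Fin NN)
    (G : Matrix ι ι ℂ) (t : ℝ)
    (hinj : ∀ c : ι → ℂ, (∀ i, j < κ i → c i = 0) → G *ᵥ c = 0 → c = 0)
    (hlow : ∀ c : ι → ℂ, (∀ i, j < κ i → c i = 0) →
      t * (star (G *ᵥ c) ⬝ᵥ (G *ᵥ c)).re ≤ (star (G *ᵥ c) ⬝ᵥ (M *ᵥ (G *ᵥ c))).re) :
    t ≤ d' j := by
  classical
  obtain ⟨W, hW, hrep⟩ := hspec
  set Y : Matrix ι ι ℂ := Wᴴ * G with hY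
  have hdep : ¬ LinearIndependent ℂ
      (fun (i : {i : ι // κ i ≤ j}) => (fun r : {r : ι // κ r < j} => Y r.1 i.1)) := by
    intro h
    have hcard := h.fintype_card_le_finrank
    rw [Module.finrank_pi] at hcard
    have e1 : {i : ι // κ i ≤ j} ≃ Fin (j.1 + 1) :=
      (κ.subtypeEquiv fun a => Iff.rfl).trans (lowEquiv j)
    have e2 : {r : ι // κ r < j} ≃ Fin j.1 :=
      (κ.subtypeEquiv fun a => Iff.rfl).trans (strictEquiv j)
    rw [Fintype.card_congr e1, Fintype.card_congr e2, Fintype.card_fin, Fintype.card_fin] at hcard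
    omega
  obtain ⟨g, hg0, i₀, hi₀⟩ := Fintype.not_linearIndependent_iff.mp hdep
  set c : ι → ℂ := fun i => if h : κ i ≤ j then g ⟨i, h⟩ else 0 with hc
  have hsupp : ∀ i, j < κ i → c i = 0 := by
    intro i hi; simp only [hc]; rw [dif_neg (not_le.mpr hi)]
  have hcne : c ≠ 0 := by
    intro h
    apply hi₀
    have := congrFun h i₀.1
    simpa only [hc, dif_pos i₀.2, Pi.zero_apply] using this
  set c₂ : ι → ℂ := Y *ᵥ c with hc₂
  have hc₂supp : ∀ r, κ r < j → c₂ r = 0 := by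
    intro r hr
    have h1 := congrFun hg0 (⟨r, hr⟩ : {r : ι // κ r < j})
    simp only [Finset.sum_apply, Pi.smul_apply, smul_eq_mul, Pi.zero_apply] at h1
    have h2 : c₂ r = ∑ i : {i : ι // κ i ≤ j}, Y r i.1 * c i.1 := by
      have e0 : c₂ r = ∑ i : ι, Y r i * c i := rfl
      rw [e0, ← Finset.sum_subtype (Finset.univ.filter (fun i => κ i ≤ j))
        (fun x => by simp) (fun i => Y r i * c i)]
      exact (Finset.sum_subset (Finset.filter_subset _ _) (fun x _ hx => by
        have : ¬ κ x ≤ j := by simpa using hx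
        rw [hsupp x (not_le.mp this), mul_zero])).symm
    rw [h2, ← h1]
    refine Finset.sum_congr rfl fun i _ => ?_
    simp only [hc, dif_pos i.2]
    ring
  have hGc : G *ᵥ c = W *ᵥ c₂ := by
    rw [hc₂, Matrix.mulVec_mulVec, hY, ← Matrix.mul_assoc, unit_mul_star hW, Matrix.one_mul]
  have hxne : G *ᵥ c ≠ 0 := fun h => hcne (hinj c hsupp h)
  have hc₂ne : c₂ ≠ 0 := by
    intro h; apply hxne; rw [hGc, h, Matrix.mulVec_zero]
  have hn2 : star (G *ᵥ c) ⬝ᵥ (G *ᵥ c) = ((∑ i, Complex.normSq (c₂ i) : ℝ) : ℂ) := by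
    rw [hGc, mulVec_unit_dot hW, dot_star_self]
  have hqf : star (G *ᵥ c) ⬝ᵥ (M *ᵥ (G *ᵥ c)) = ((∑ i, d' (κ i) * Complex.normSq (c₂ i) : ℝ) : ℂ) := by
    rw [hGc, hrep]; exact qf_diag hW _ c₂
  have hP : (0:ℝ) < ∑ i, Complex.normSq (c₂ i) := by
    have h0 : (0:ℝ) ≤ ∑ i, Complex.normSq (c₂ i) :=
      Finset.sum_nonneg fun i _ => Complex.normSq_nonneg _
    rcases h0.lt_or_eq with h | h
    · exact h
    · exact absurd (dot_star_self_nonneg_zero h.symm) hc₂ne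
  have hbound : ∑ i, d' (κ i) * Complex.normSq (c₂ i) ≤ d' j * ∑ i, Complex.normSq (c₂ i) := by
    rw [Finset.mul_sum]
    refine Finset.sum_le_sum fun i _ => ?_
    by_cases h : κ i < j
    · rw [hc₂supp i h]; simp
    · exact mul_le_mul_of_nonneg_right (hd' (not_lt.mp h)) (Complex.normSq_nonneg _)
  have hl := hlow c hsupp
  rw [hn2, hqf, Complex.ofReal_re, Complex.ofReal_re] at hl
  exact le_of_mul_le_mul_right (hl.trans hbound) hP


lemma exists_antitone_perm {NN : ℕ} (v : Fin NN → ℝ) :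
    ∃ τ : Equiv.Perm (Fin NN), Antitone (fun k => v (τ k)) := by
  refine ⟨Tuple.sort (fun k => -v k), fun a b hab => ?_⟩
  have h := Tuple.monotone_sort (fun k => -v k) hab
  simpa using h

lemma perm_conj {W : Matrix ι ι ℂ} (hW : W ∈ Matrix.unitaryGroup ι ℂ)
    (v : ι → ℂ) (σ : Equiv.Perm ι) :
    W * Matrix.diagonal v * Wᴴ =
      (W.submatrix id σ) * Matrix.diagonal (fun i => v (σ i)) * (W.submatrix id σ)ᴴ := by
  have hdiag : Matrix.diagonal (fun i => v (σ i)) = (Matrix.diagonal v).submatrix σ σ := by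
    ext i k
    simp only [Matrix.submatrix_apply, Matrix.diagonal_apply]
    by_cases h : i = k
    · simp [h]
    · rw [if_neg h, if_neg (fun hc => h (σ.injective hc))]
  rw [hdiag, Matrix.conjTranspose_submatrix,
    ← Matrix.submatrix_mul W (Matrix.diagonal v) id σ σ σ.bijective,
    ← Matrix.submatrix_mul (W * Matrix.diagonal v) Wᴴ id σ id σ.bijective,
    Matrix.submatrix_id_id]

lemma perm_mem_unit {W : Matrix ι ι ℂ} (hW : W ∈ Matrix.unitaryGroup ι ℂ) (σ : Equiv.Perm ι) :
    W.submatrix id σ ∈ Matrix.unitaryGroup ι ℂ := by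
  rw [Matrix.mem_unitaryGroup_iff', Matrix.star_eq_conjTranspose,
    Matrix.conjTranspose_submatrix,
    ← Matrix.submatrix_mul Wᴴ W σ id σ Function.bijective_id,
    unit_star_mul hW]
  exact Matrix.submatrix_one_equiv σ

lemma exists_spec_pair {NN : ℕ} (κ : ι ≃ Fin NN) {M : Matrix ι ι ℂ} (hM : M.IsHermitian) :
    ∃ (d : Fin NN → ℝ) (W : Matrix ι ι ℂ), Antitone d ∧ W ∈ Matrix.unitaryGroup ι ℂ ∧
      ∀ f' : ℝ → ℝ, cfc f' M = W * Matrix.diagonal (fun i => (f' (d (κ i)) : ℂ)) * Wᴴ := by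
  obtain ⟨τ, hτ⟩ := exists_antitone_perm (fun k => hM.eigenvalues (κ.symm k))
  set σ : Equiv.Perm ι := κ.trans (τ.trans κ.symm) with hσ
  set d : Fin NN → ℝ := fun k => hM.eigenvalues (κ.symm (τ k)) with hd
  have hW₀ : (hM.eigenvectorUnitary : Matrix ι ι ℂ) ∈ Matrix.unitaryGroup ι ℂ :=
    hM.eigenvectorUnitary.2
  refine ⟨d, (hM.eigenvectorUnitary : Matrix ι ι ℂ).submatrix id σ, hτ, perm_mem_unit hW₀ σ, ?_⟩
  intro f'
  have base : cfc f' M = (hM.eigenvectorUnitary : Matrix ι ι ℂ) *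
      Matrix.diagonal (fun i => ((f' (hM.eigenvalues i)) : ℂ)) *
      (hM.eigenvectorUnitary : Matrix ι ι ℂ)ᴴ := by
    rw [hM.cfc_eq, Matrix.IsHermitian.cfc, Unitary.conjStarAlgAut_apply, Matrix.star_eq_conjTranspose]
    rfl
  rw [base, perm_conj hW₀ _ σ]
  rfl

lemma spec_nonneg {NN : ℕ} (κ : ι ≃ Fin NN) {M : Matrix ι ι ℂ} {d : Fin NN → ℝ}
    (hM : M.PosSemidef) (h : HasSpec κ M d) : ∀ k, 0 ≤ d k := by
  obtain ⟨W, hW, rfl⟩ := h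
  intro k
  have h2 := hM.dotProduct_mulVec_nonneg (W *ᵥ Pi.single (κ.symm k) 1)
  rw [qf_diag hW (fun i => d (κ i)) (Pi.single (κ.symm k) 1)] at h2
  rw [Complex.zero_le_real] at h2
  convert h2 using 1
  rw [Finset.sum_eq_single (κ.symm k)]
  · simp
  · intro b _ hb
    rw [Pi.single_eq_of_ne hb]
    simp
  · simp

lemma spec_posSemidef {NN : ℕ} (κ : ι ≃ Fin NN) {M : Matrix ι ι ℂ} {d : Fin NN → ℝ}
    (h : HasSpec κ M d) (hd : ∀ k, 0 ≤ d k) : M.PosSemidef := by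
  obtain ⟨W, hW, rfl⟩ := h
  exact (Matrix.posSemidef_diagonal_iff.mpr
    (fun i => by exact_mod_cast hd (κ i))).mul_mul_conjTranspose_same W

lemma spec_isHermitian {NN : ℕ} (κ : ι ≃ Fin NN) {M : Matrix ι ι ℂ} {d : Fin NN → ℝ}
    (h : HasSpec κ M d) : M.IsHermitian := by
  obtain ⟨W, hW, rfl⟩ := h
  exact Matrix.isHermitian_mul_mul_conjTranspose W
    (Matrix.isHermitian_diagonal_of_self_adjoint _
      (funext fun i => Complex.conj_ofReal _))

lemma psd_diff_diag {W : Matrix ι ι ℂ} (hW : W ∈ Matrix.unitaryGroup ι ℂ) {u v : ι → ℝ}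
    (huv : ∀ i, u i ≤ v i) :
    (W * Matrix.diagonal (fun i => (v i : ℂ)) * Wᴴ
      - W * Matrix.diagonal (fun i => (u i : ℂ)) * Wᴴ).PosSemidef := by
  have key : W * Matrix.diagonal (fun i => (v i : ℂ)) * Wᴴ
      - W * Matrix.diagonal (fun i => (u i : ℂ)) * Wᴴ
      = W * Matrix.diagonal (fun i => ((v i - u i : ℝ) : ℂ)) * Wᴴ := by
    rw [← Matrix.sub_mul, ← Matrix.mul_sub, Matrix.diagonal_sub]
    push_cast
    rfl
  rw [key]
  exact (Matrix.posSemidef_diagonal_iff.mpr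
    (fun i => by rw [Complex.zero_le_real]; linarith [huv i])).mul_mul_conjTranspose_same W

lemma spec_mono {NN : ℕ} (κ : ι ≃ Fin NN) {M M' : Matrix ι ι ℂ} {d d' : Fin NN → ℝ}
    (hd : Antitone d) (hd' : Antitone d')
    (h1 : HasSpec κ M d) (h2 : HasSpec κ M' d')
    (hle : (M' - M).PosSemidef) : ∀ k, d k ≤ d' k := by
  intro j
  obtain ⟨W, hW, hrep⟩ := h1
  refine cf_le κ hd' h2 j W (d j) ?_ ?_
  · intro c _ hc
    have : Wᴴ *ᵥ (W *ᵥ c) = c := by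
      rw [Matrix.mulVec_mulVec, unit_star_mul hW, Matrix.one_mulVec]
    rw [hc, Matrix.mulVec_zero] at this
    exact this.symm
  · intro c hcsupp
    have e1 : star (W *ᵥ c) ⬝ᵥ (M *ᵥ (W *ᵥ c))
        = ((∑ i, d (κ i) * Complex.normSq (c i) : ℝ) : ℂ) := by
      rw [hrep]; exact qf_diag hW _ c
    have e2 : star (W *ᵥ c) ⬝ᵥ (W *ᵥ c) = ((∑ i, Complex.normSq (c i) : ℝ) : ℂ) := by
      rw [mulVec_unit_dot hW, dot_star_self]
    have e3 : star (W *ᵥ c) ⬝ᵥ (M' *ᵥ (W *ᵥ c))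
        = star (W *ᵥ c) ⬝ᵥ (M *ᵥ (W *ᵥ c)) + star (W *ᵥ c) ⬝ᵥ ((M' - M) *ᵥ (W *ᵥ c)) := by
      rw [← dotProduct_add, ← Matrix.add_mulVec, add_comm, sub_add_cancel]
    have e4 := hle.dotProduct_mulVec_nonneg (W *ᵥ c)
    have e4' : 0 ≤ (star (W *ᵥ c) ⬝ᵥ ((M' - M) *ᵥ (W *ᵥ c))).re := by
      rw [Complex.le_def] at e4
      simpa using e4.1
    have hsum : d j * ∑ i, Complex.normSq (c i) ≤ ∑ i, d (κ i) * Complex.normSq (c i) := by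
      rw [Finset.mul_sum]
      refine Finset.sum_le_sum fun i _ => ?_
      by_cases h : j < κ i
      · rw [hcsupp i h]; simp
      · exact mul_le_mul_of_nonneg_right (hd (not_lt.mp h)) (Complex.normSq_nonneg _)
    rw [e2, e3, Complex.add_re, e1, Complex.ofReal_re, Complex.ofReal_re]
    linarith


lemma spec_affine {NN : ℕ} (κ : ι ≃ Fin NN) {M : Matrix ι ι ℂ} {d : Fin NN → ℝ}
    (h : HasSpec κ M d) (a s : ℝ) :
    HasSpec κ ((a:ℂ) • 1 + (s:ℂ) • M) (fun k => a + s * d k) := by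
  obtain ⟨W, hW, rfl⟩ := h
  refine ⟨W, hW, ?_⟩
  have hdiag : (a:ℂ) • (1 : Matrix ι ι ℂ)
      + (s:ℂ) • Matrix.diagonal (fun i => (d (κ i) : ℂ))
      = Matrix.diagonal (fun i => ((a + s * d (κ i) : ℝ) : ℂ)) := by
    ext i k
    rcases eq_or_ne i k with hik | hik
    · subst hik
      simp only [Matrix.add_apply, Matrix.smul_apply, Matrix.one_apply_eq,
        Matrix.diagonal_apply_eq, smul_eq_mul]
      push_cast
      ring
    · simp [Matrix.diagonal_apply_ne _ hik, Matrix.one_apply_ne hik]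
  rw [← hdiag, Matrix.mul_add, Matrix.add_mul]
  congr 1
  · rw [Matrix.mul_smul, Matrix.mul_one, Matrix.smul_mul, unit_mul_star hW]
  · rw [Matrix.mul_smul, Matrix.smul_mul]

lemma spec_mul_comm {NN : ℕ} (κ : ι ≃ Fin NN) (R : Matrix ι ι ℂ) {d d' : Fin NN → ℝ}
    (hd : Antitone d) (hd' : Antitone d')
    (h1 : HasSpec κ (Rᴴ * R) d) (h2 : HasSpec κ (R * Rᴴ) d') : ∀ k, d k ≤ d' k := by
  intro j
  by_cases ht : d j ≤ 0
  · have hpsd : (R * Rᴴ).PosSemidef := by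
      simpa using Matrix.posSemidef_conjTranspose_mul_self Rᴴ
    have := spec_nonneg κ hpsd h2 j
    linarith
  push_neg at ht
  obtain ⟨W, hW, hrep⟩ := h1
  have hq1 : ∀ c : ι → ℂ, star (R *ᵥ (W *ᵥ c)) ⬝ᵥ (R *ᵥ (W *ᵥ c))
      = ((∑ i, d (κ i) * Complex.normSq (c i) : ℝ) : ℂ) := by
    intro c
    rw [← dot_AhA, hrep]
    exact qf_diag hW _ c
  refine cf_le κ hd' h2 j (R * W) (d j) ?_ ?_
  · intro c hcsupp hc0
    have h0 : R *ᵥ (W *ᵥ c) = 0 := by rw [Matrix.mulVec_mulVec]; exact hc0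
    have hsum : ((∑ i, d (κ i) * Complex.normSq (c i) : ℝ) : ℂ) = 0 := by
      rw [← hq1 c, h0]; simp
    have hsum' : (∑ i, d (κ i) * Complex.normSq (c i) : ℝ) = 0 := by exact_mod_cast hsum
    have hterm : ∀ i ∈ Finset.univ, (0:ℝ) ≤ d (κ i) * Complex.normSq (c i) := by
      intro i _
      by_cases h : j < κ i
      · rw [hcsupp i h]; simp
      · exact mul_nonneg (le_of_lt (lt_of_lt_of_le ht (hd (not_lt.mp h))))
          (Complex.normSq_nonneg _)
    funext i
    have hzero := (Finset.sum_eq_zero_iff_of_nonneg hterm).mp hsum' i (Finset.mem_univ i)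
    by_cases h : j < κ i
    · rw [hcsupp i h]; rfl
    · have hdpos : 0 < d (κ i) := lt_of_lt_of_le ht (hd (not_lt.mp h))
      have := (mul_eq_zero.mp hzero).resolve_left (ne_of_gt hdpos)
      simpa using Complex.normSq_eq_zero.mp this
  · intro c hcsupp
    have hx' : (R * W) *ᵥ c = R *ᵥ (W *ᵥ c) := (Matrix.mulVec_mulVec c R W).symm
    have e2 : star ((R * W) *ᵥ c) ⬝ᵥ ((R * W) *ᵥ c)
        = ((∑ i, d (κ i) * Complex.normSq (c i) : ℝ) : ℂ) := by rw [hx']; exact hq1 c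
    have e3 : star ((R * W) *ᵥ c) ⬝ᵥ ((R * Rᴴ) *ᵥ ((R * W) *ᵥ c))
        = star (Rᴴ *ᵥ ((R * W) *ᵥ c)) ⬝ᵥ (Rᴴ *ᵥ ((R * W) *ᵥ c)) := by
      have := dot_AhA Rᴴ ((R * W) *ᵥ c)
      rwa [Matrix.conjTranspose_conjTranspose] at this
    have e4 : Rᴴ *ᵥ ((R * W) *ᵥ c)
        = W *ᵥ (Matrix.diagonal (fun i => (d (κ i) : ℂ)) *ᵥ c) := by
      rw [hx', Matrix.mulVec_mulVec, Matrix.mulVec_mulVec, Matrix.mulVec_mulVec]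
      congr 1
      rw [hrep, Matrix.mul_assoc (W * _), unit_star_mul hW, Matrix.mul_one]
    have e5 : star (Rᴴ *ᵥ ((R * W) *ᵥ c)) ⬝ᵥ (Rᴴ *ᵥ ((R * W) *ᵥ c))
        = ((∑ i, (d (κ i))^2 * Complex.normSq (c i) : ℝ) : ℂ) := by
      rw [e4, mulVec_unit_dot hW, dot_star_self]
      norm_cast
      refine Finset.sum_congr rfl fun i _ => ?_
      rw [Matrix.mulVec_diagonal, Complex.normSq_mul, Complex.normSq_ofReal]
      ring
    rw [e2, e3, e5, Complex.ofReal_re, Complex.ofReal_re, Finset.mul_sum]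
    refine Finset.sum_le_sum fun i _ => ?_
    by_cases h : j < κ i
    · rw [hcsupp i h]; simp
    · have h1 : d j ≤ d (κ i) := hd (not_lt.mp h)
      have h2 := Complex.normSq_nonneg (c i)
      nlinarith [mul_nonneg (mul_nonneg (sub_nonneg.mpr h1) (ht.le.trans h1)) h2]


def pad {p : ℕ} (NN : ℕ) (c : Fin p → ℝ) : Fin NN → ℝ :=
  fun k => if h : (k : ℕ) < p then c ⟨k, h⟩ else 0

lemma pad_antitone {p NN : ℕ} {c : Fin p → ℝ} (hc : Antitone c) (hc0 : ∀ j, 0 ≤ c j) :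
    Antitone (pad NN c) := by
  intro k k' hkk'
  unfold pad
  by_cases h' : (k' : ℕ) < p
  · have h : (k : ℕ) < p := lt_of_le_of_lt (Fin.le_def.mp hkk') h'
    rw [dif_pos h', dif_pos h]
    exact hc (Fin.mk_le_mk.mpr (Fin.le_def.mp hkk'))
  · rw [dif_neg h']
    by_cases h : (k : ℕ) < p
    · rw [dif_pos h]; exact hc0 _
    · rw [dif_neg h]

lemma pad_nonneg {p NN : ℕ} {c : Fin p → ℝ} (hc0 : ∀ j, 0 ≤ c j) :
    ∀ k, 0 ≤ pad NN c k := by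
  intro k
  unfold pad
  by_cases h : (k : ℕ) < p
  · rw [dif_pos h]; exact hc0 _
  · rw [dif_neg h]

lemma pad_le_pad {p NN : ℕ} {c e : Fin p → ℝ} (h : ∀ j, c j ≤ e j) :
    ∀ k, pad NN c k ≤ pad NN e k := by
  intro k
  unfold pad
  by_cases hk : (k : ℕ) < p
  · rw [dif_pos hk, dif_pos hk]; exact h _
  · rw [dif_neg hk, dif_neg hk]

lemma hasSpec_corner₁ {p q NN : ℕ} (κ : Fin p ⊕ Fin q ≃ Fin NN)
    (hκ : ∀ j : Fin p, ((κ (Sum.inl j)) : ℕ) = (j : ℕ))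
    {M₁ : Matrix (Fin p) (Fin p) ℂ} {c : Fin p → ℝ}
    (h : HasSpec (Equiv.refl (Fin p)) M₁ c) :
    HasSpec κ (Matrix.fromBlocks M₁ 0 0 0) (pad NN c) := by
  obtain ⟨W₁, hW₁, rfl⟩ := h
  have hfb : Matrix.fromBlocks (Matrix.diagonal (fun j : Fin p => ((c j : ℝ) : ℂ))) 0 0 0
      = Matrix.diagonal (Sum.elim (fun j : Fin p => ((c j : ℝ) : ℂ)) (fun _ : Fin q => (0:ℂ))) := by
    have := Matrix.fromBlocks_diagonal (fun j : Fin p => ((c j : ℝ) : ℂ)) (fun _ : Fin q => (0:ℂ))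
    rwa [Matrix.diagonal_zero] at this
  have hfun : (fun i => ((pad NN c (κ i) : ℝ) : ℂ))
      = Sum.elim (fun j : Fin p => ((c j : ℝ) : ℂ)) (fun _ : Fin q => (0:ℂ)) := by
    funext i
    cases i with
    | inl j =>
      simp only [Sum.elim_inl]
      unfold pad
      have hj : ((κ (Sum.inl j)) : ℕ) < p := by rw [hκ j]; exact j.2
      rw [dif_pos hj]
      congr 2
      exact Fin.ext (hκ j)
    | inr j =>
      simp only [Sum.elim_inr]
      unfold pad
      rw [dif_neg ?_]
      · norm_cast
      · intro hlt
        have h1 : κ (Sum.inl ⟨(κ (Sum.inr j) : ℕ), hlt⟩) = κ (Sum.inr j) := Fin.ext (hκ _)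
        exact Sum.inl_ne_inr (κ.injective h1)
  refine ⟨Matrix.fromBlocks W₁ 0 0 1, ?_, ?_⟩
  · rw [Matrix.mem_unitaryGroup_iff', Matrix.star_eq_conjTranspose,
      Matrix.fromBlocks_conjTranspose, Matrix.fromBlocks_multiply]
    simp [unit_star_mul hW₁, Matrix.fromBlocks_one]
  · rw [hfun, ← hfb, Matrix.fromBlocks_conjTranspose, Matrix.fromBlocks_multiply,
      Matrix.fromBlocks_multiply]
    simp

lemma hasSpec_corner₂ {p q NN : ℕ} (κ : Fin p ⊕ Fin q ≃ Fin NN)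
    (hκ : ∀ j : Fin q, ((κ (Sum.inr j)) : ℕ) = (j : ℕ))
    {M₂ : Matrix (Fin q) (Fin q) ℂ} {c : Fin q → ℝ}
    (h : HasSpec (Equiv.refl (Fin q)) M₂ c) :
    HasSpec κ (Matrix.fromBlocks 0 0 0 M₂) (pad NN c) := by
  obtain ⟨W₂, hW₂, rfl⟩ := h
  have hfb : Matrix.fromBlocks 0 0 0 (Matrix.diagonal (fun j : Fin q => ((c j : ℝ) : ℂ)))
      = Matrix.diagonal (Sum.elim (fun _ : Fin p => (0:ℂ)) (fun j : Fin q => ((c j : ℝ) : ℂ))) := by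
    have := Matrix.fromBlocks_diagonal (fun _ : Fin p => (0:ℂ)) (fun j : Fin q => ((c j : ℝ) : ℂ))
    rwa [Matrix.diagonal_zero] at this
  have hfun : (fun i => ((pad NN c (κ i) : ℝ) : ℂ))
      = Sum.elim (fun _ : Fin p => (0:ℂ)) (fun j : Fin q => ((c j : ℝ) : ℂ)) := by
    funext i
    cases i with
    | inl j =>
      simp only [Sum.elim_inl]
      unfold pad
      rw [dif_neg ?_]
      · norm_cast
      · intro hlt
        have h1 : κ (Sum.inr ⟨(κ (Sum.inl j) : ℕ), hlt⟩) = κ (Sum.inl j) := Fin.ext (hκ _)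
        exact Sum.inr_ne_inl (κ.injective h1)
    | inr j =>
      simp only [Sum.elim_inr]
      unfold pad
      have hj : ((κ (Sum.inr j)) : ℕ) < q := by rw [hκ j]; exact j.2
      rw [dif_pos hj]
      congr 2
      exact Fin.ext (hκ j)
  refine ⟨Matrix.fromBlocks 1 0 0 W₂, ?_, ?_⟩
  · rw [Matrix.mem_unitaryGroup_iff', Matrix.star_eq_conjTranspose,
      Matrix.fromBlocks_conjTranspose, Matrix.fromBlocks_multiply]
    simp [unit_star_mul hW₂, Matrix.fromBlocks_one]
  · rw [hfun, ← hfb, Matrix.fromBlocks_conjTranspose, Matrix.fromBlocks_multiply,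
      Matrix.fromBlocks_multiply]
    simp



lemma n_mono {NN : ℕ} (κ : ι ≃ Fin NN) (N : Matrix ι ι ℂ → ℝ)
    (hNadd : ∀ M₁ M₂, N (M₁ + M₂) ≤ N M₁ + N M₂)
    (hNsmul : ∀ (z : ℂ) M, N (z • M) = ‖z‖ * N M)
    (hNinv : ∀ U V : Matrix ι ι ℂ, U ∈ Matrix.unitaryGroup ι ℂ →
      V ∈ Matrix.unitaryGroup ι ℂ → ∀ M, N (U * M * V) = N M)
    {M M' : Matrix ι ι ℂ} {d d' : Fin NN → ℝ}
    (h : HasSpec κ M d) (h' : HasSpec κ M' d')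
    (hd0 : ∀ k, 0 ≤ d k) (hdd' : ∀ k, d k ≤ d' k) : N M ≤ N M' := by
  obtain ⟨W, hW, rfl⟩ := h
  obtain ⟨W', hW', rfl⟩ := h'
  rw [hNinv W Wᴴ hW (unit_star_mem hW), hNinv W' W'ᴴ hW' (unit_star_mem hW')]
  set v : ι → ℝ := fun i => d (κ i) with hv
  set v' : ι → ℝ := fun i => d' (κ i) with hv'
  have hv0 : ∀ i, 0 ≤ v i := fun i => hd0 (κ i)
  have hvv' : ∀ i, v i ≤ v' i := fun i => hdd' (κ i)
  classical
  set t : ι → ℝ := fun i => if v' i = 0 then 0 else v i / v' i with htdef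
  have ht0 : ∀ i, 0 ≤ t i := by
    intro i; rw [htdef]
    by_cases hz : v' i = 0
    · simp [hz]
    · simp only [hz, if_false]
      exact div_nonneg (hv0 i) (le_trans (hv0 i) (hvv' i))
  have ht1 : ∀ i, t i ≤ 1 := by
    intro i; rw [htdef]
    by_cases hz : v' i = 0
    · simp [hz]
    · simp only [hz, if_false]
      rw [div_le_one (lt_of_le_of_ne (le_trans (hv0 i) (hvv' i)) (Ne.symm hz))]
      exact hvv' i
  have htv : ∀ i, t i * v' i = v i := by
    intro i; rw [htdef]
    by_cases hz : v' i = 0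
    · simp only [hz, if_true, mul_zero]
      exact (le_antisymm (hz ▸ hvv' i) (hv0 i)).symm
    · simp only [hz, if_false]
      field_simp
  set u : ι → ℂ := fun i => (t i : ℂ) + (Real.sqrt (1 - t i ^ 2) : ℂ) * Complex.I with hu
  have hstar : ∀ i, star (u i) = (t i : ℂ) - (Real.sqrt (1 - t i ^ 2) : ℂ) * Complex.I := by
    intro i
    simp only [hu, star_add, star_mul', Complex.star_def, Complex.conj_ofReal, Complex.conj_I]
    ring
  have hnormu : ∀ i, u i * star (u i) = 1 := by
    intro i
    rw [hstar i]
    simp only [hu]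
    have hsq : (Real.sqrt (1 - t i ^ 2) : ℝ) ^ 2 = 1 - t i ^ 2 :=
      Real.sq_sqrt (by nlinarith [ht0 i, ht1 i])
    have : ((t i : ℂ) + (Real.sqrt (1 - t i ^ 2) : ℂ) * Complex.I) *
        ((t i : ℂ) - (Real.sqrt (1 - t i ^ 2) : ℂ) * Complex.I)
        = (t i : ℂ)^2 + ((Real.sqrt (1 - t i ^ 2)) : ℂ)^2 := by
      have hI := Complex.I_sq
      ring_nf
      rw [Complex.I_sq]
      ring
    rw [this]
    push_cast [hsq]
    ring_nf
    norm_cast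
    nlinarith [hsq]
  have humem : Matrix.diagonal u ∈ Matrix.unitaryGroup ι ℂ := by
    rw [Matrix.mem_unitaryGroup_iff, Matrix.star_eq_conjTranspose, Matrix.diagonal_conjTranspose,
      Matrix.diagonal_mul_diagonal]
    have heq : (fun i => u i * star u i) = fun _ => (1:ℂ) :=
      funext fun i => by rw [Pi.star_apply]; exact hnormu i
    rw [heq, Matrix.diagonal_one]
  have hkey : Matrix.diagonal (fun i => (v i : ℂ))
      = ((1/2 : ℝ) : ℂ) • (Matrix.diagonal u * Matrix.diagonal (fun i => (v' i : ℂ)))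
        + ((1/2 : ℝ) : ℂ) • ((Matrix.diagonal u)ᴴ * Matrix.diagonal (fun i => (v' i : ℂ))) := by
    rw [Matrix.diagonal_conjTranspose, Matrix.diagonal_mul_diagonal, Matrix.diagonal_mul_diagonal]
    ext i k
    rcases eq_or_ne i k with hik | hik
    · subst hik
      simp only [Matrix.add_apply, Matrix.smul_apply, Matrix.diagonal_apply_eq, smul_eq_mul,
        Pi.star_apply]
      rw [hstar i]
      simp only [hu]
      have := htv i
      push_cast [← this]
      ring
    · simp [Matrix.diagonal_apply_ne _ hik]
  rw [hkey]
  have habs : ‖((1/2 : ℝ) : ℂ)‖ = 1/2 := by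
    rw [Complex.norm_real]; norm_num
  have hU1 : N (Matrix.diagonal u * Matrix.diagonal (fun i => (v' i : ℂ)))
      = N (Matrix.diagonal (fun i => (v' i : ℂ))) := by
    have := hNinv (Matrix.diagonal u) 1 humem one_mem_unit (Matrix.diagonal (fun i => (v' i : ℂ)))
    rwa [Matrix.mul_one] at this
  have hU2 : N ((Matrix.diagonal u)ᴴ * Matrix.diagonal (fun i => (v' i : ℂ)))
      = N (Matrix.diagonal (fun i => (v' i : ℂ))) := by
    have := hNinv (Matrix.diagonal u)ᴴ 1 (unit_star_mem humem) one_mem_unit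
      (Matrix.diagonal (fun i => (v' i : ℂ)))
    rwa [Matrix.mul_one] at this
  calc N (((1/2 : ℝ) : ℂ) • (Matrix.diagonal u * Matrix.diagonal (fun i => (v' i : ℂ)))
        + ((1/2 : ℝ) : ℂ) • ((Matrix.diagonal u)ᴴ * Matrix.diagonal (fun i => (v' i : ℂ))))
      ≤ N (((1/2 : ℝ) : ℂ) • (Matrix.diagonal u * Matrix.diagonal (fun i => (v' i : ℂ))))
        + N (((1/2 : ℝ) : ℂ) • ((Matrix.diagonal u)ᴴ * Matrix.diagonal (fun i => (v' i : ℂ)))) :=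
      hNadd _ _
    _ = N (Matrix.diagonal (fun i => (v' i : ℂ))) := by
      rw [hNsmul, hNsmul, habs, hU1, hU2]; ring


section Scalar

variable {f : ℝ → ℝ} (hconc : ConcaveOn ℝ (Set.Ici (0:ℝ)) f)
  (hf0 : ∀ x : ℝ, 0 ≤ x → 0 ≤ f x)

include hconc hf0 in
lemma concave_mono : ∀ x y, 0 ≤ x → x ≤ y → f x ≤ f y := by
  intro x y hx hxy
  rcases eq_or_lt_of_le hxy with rfl | hlt
  · exact le_refl _
  by_contra hcon
  push_neg at hcon
  set δ := f x - f y with hδ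
  have hδpos : 0 < δ := by simp only [hδ]; linarith
  set z := (y * f x - x * f y)/δ + (y + 1) with hz
  have hy0 : 0 ≤ y := le_trans hx hxy
  have hnum : 0 ≤ y * f x - x * f y := by nlinarith [hf0 y hy0]
  have hyz : y < z := by
    have := div_nonneg hnum hδpos.le
    simp only [hz]; linarith
  have hxz : x < z := lt_trans hlt hyz
  have hzx : 0 < z - x := by linarith
  set a := (z - y)/(z - x) with ha
  set b := (y - x)/(z - x) with hb
  have ha0 : 0 ≤ a := div_nonneg (by linarith) hzx.le
  have hb0 : 0 ≤ b := div_nonneg (by linarith) hzx.le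
  have hab : a + b = 1 := by
    simp only [ha, hb]; field_simp; ring
  have hcc := hconc.2 (Set.mem_Ici.mpr hx) (Set.mem_Ici.mpr (le_trans hx hxz.le)) ha0 hb0 hab
  rw [smul_eq_mul, smul_eq_mul, smul_eq_mul, smul_eq_mul] at hcc
  have hcomb : a * x + b * z = y := by
    simp only [ha, hb]; field_simp; ring
  rw [hcomb] at hcc
  have hfz : 0 ≤ f z := hf0 z (le_trans hx hxz.le)
  have h2 : (z - y) * f x > (z - x) * f y := by
    have hzd : z * δ - (y * f x - x * f y) = (y + 1) * δ := by
      simp only [hz]; field_simp; ring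
    nlinarith
  have h3 : a * f x > f y := by
    rw [ha, div_mul_eq_mul_div, gt_iff_lt, lt_div_iff₀ hzx]
    nlinarith
  nlinarith

include hconc hf0 in
lemma supergrad (F : Finset ℝ) (hF : ∀ x ∈ F, 0 ≤ x) (t : ℝ) (ht : 0 ≤ t) :
    ∃ s : ℝ, 0 ≤ s ∧ s * t ≤ f t ∧ ∀ x ∈ F, f x ≤ f t + s * (x - t) := by
  classical
  set E := (F.filter (fun x => t < x)).image (fun x => (f x - f t)/(x - t)) with hE
  set s := (insert (0:ℝ) E).max' (Finset.insert_nonempty _ _) with hs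
  have hs0 : 0 ≤ s := Finset.le_max' _ 0 (Finset.mem_insert_self _ _)
  have hsmem := Finset.max'_mem (insert (0:ℝ) E) (Finset.insert_nonempty _ _)
  have key3 : ∀ z, 0 ≤ z → t < z → t * f z ≤ z * f t := by
    intro z hz0 htz
    have hzpos : 0 < z := lt_of_le_of_lt ht htz
    have ha0 : (0:ℝ) ≤ 1 - t/z := by
      rw [sub_nonneg, div_le_one hzpos]; exact htz.le
    have hb0 : (0:ℝ) ≤ t/z := div_nonneg ht hzpos.le
    have hab : (1 - t/z) + t/z = 1 := by ring
    have hcc := hconc.2 (Set.mem_Ici.mpr (le_refl (0:ℝ))) (Set.mem_Ici.mpr hz0) ha0 hb0 hab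
    rw [smul_eq_mul, smul_eq_mul, smul_eq_mul, smul_eq_mul] at hcc
    have hcomb : (1 - t/z) * 0 + t/z * z = t := by field_simp; ring
    rw [hcomb] at hcc
    have hf00 : 0 ≤ f 0 := hf0 0 (le_refl _)
    have : t/z * f z ≤ f t := by nlinarith
    rw [div_mul_eq_mul_div, div_le_iff₀ hzpos] at this
    nlinarith
  have hst : s * t ≤ f t := by
    rcases Finset.mem_insert.mp hsmem with h0 | hE'
    · rw [hs, h0]; simpa using hf0 t ht
    · obtain ⟨z, hzmem, hzeq⟩ := Finset.mem_image.mp hE'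
      obtain ⟨hzF, htz⟩ := Finset.mem_filter.mp hzmem
      have h3 := key3 z (hF z hzF) htz
      rw [hs, ← hzeq, div_mul_eq_mul_div, div_le_iff₀ (by linarith : (0:ℝ) < z - t)]
      nlinarith
  refine ⟨s, hs0, hst, ?_⟩
  intro x hx
  rcases lt_trichotomy t x with hlt | heq | hgt
  · have hmem : (f x - f t)/(x - t) ∈ E :=
      Finset.mem_image.mpr ⟨x, Finset.mem_filter.mpr ⟨hx, hlt⟩, rfl⟩
    have hle : (f x - f t)/(x - t) ≤ s :=
      Finset.le_max' _ _ (Finset.mem_insert_of_mem (s := E) (b := 0) hmem)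
    rw [div_le_iff₀ (by linarith : (0:ℝ) < x - t)] at hle
    linarith
  · rw [← heq]; simp
  · rcases Finset.mem_insert.mp hsmem with h0 | hE'
    · rw [hs, h0]
      have := concave_mono hconc hf0 x t (hF x hx) hgt.le
      linarith
    · obtain ⟨z, hzmem, hzeq⟩ := Finset.mem_image.mp hE'
      obtain ⟨hzF, htz⟩ := Finset.mem_filter.mp hzmem
      have hx0 : 0 ≤ x := hF x hx
      have hz0 : 0 ≤ z := hF z hzF
      have hzx : (0:ℝ) < z - x := by linarith
      have hzt : (0:ℝ) < z - t := by linarith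
      have ha0 : (0:ℝ) ≤ (z - t)/(z - x) := div_nonneg (by linarith) hzx.le
      have hb0 : (0:ℝ) ≤ (t - x)/(z - x) := div_nonneg (by linarith) hzx.le
      have hab : (z - t)/(z - x) + (t - x)/(z - x) = 1 := by field_simp; ring
      have hcc := hconc.2 (Set.mem_Ici.mpr hx0) (Set.mem_Ici.mpr hz0) ha0 hb0 hab
      rw [smul_eq_mul, smul_eq_mul, smul_eq_mul, smul_eq_mul] at hcc
      have hcomb : (z - t)/(z - x) * x + (t - x)/(z - x) * z = t := by field_simp; ring
      rw [hcomb] at hcc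
      have hcc2 : (z - t) * f x + (t - x) * f z ≤ (z - x) * f t := by
        rw [div_mul_eq_mul_div, div_mul_eq_mul_div, ← add_div,
          div_le_iff₀ hzx] at hcc
        linarith
      rw [hs, ← hzeq, div_mul_eq_mul_div, ← sub_le_iff_le_add', le_div_iff₀ hzt]
      nlinarith

end Scalar


lemma conj_mul_conj {W : Matrix ι ι ℂ} (hW : W ∈ Matrix.unitaryGroup ι ℂ)
    (D₁ D₂ : Matrix ι ι ℂ) :
    (W * D₁ * Wᴴ) * (W * D₂ * Wᴴ) = W * (D₁ * D₂) * Wᴴ := by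
  rw [Matrix.mul_assoc (W * D₁) Wᴴ (W * D₂ * Wᴴ), ← Matrix.mul_assoc Wᴴ (W * D₂) Wᴴ,
    ← Matrix.mul_assoc Wᴴ W D₂, unit_star_mul hW, Matrix.one_mul,
    ← Matrix.mul_assoc (W * D₁) D₂ Wᴴ, Matrix.mul_assoc W D₁ D₂]

lemma affine_rep {W : Matrix ι ι ℂ} (hW : W ∈ Matrix.unitaryGroup ι ℂ) (v : ι → ℝ)
    (a s : ℝ) :
    (a:ℂ) • (1 : Matrix ι ι ℂ) + (s:ℂ) • (W * Matrix.diagonal (fun i => (v i : ℂ)) * Wᴴ)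
      = W * Matrix.diagonal (fun i => ((a + s * v i : ℝ) : ℂ)) * Wᴴ := by
  have hdiag : (a:ℂ) • (1 : Matrix ι ι ℂ)
      + (s:ℂ) • Matrix.diagonal (fun i => (v i : ℂ))
      = Matrix.diagonal (fun i => ((a + s * v i : ℝ) : ℂ)) := by
    ext i k
    rcases eq_or_ne i k with hik | hik
    · subst hik
      simp only [Matrix.add_apply, Matrix.smul_apply, Matrix.one_apply_eq,
        Matrix.diagonal_apply_eq, smul_eq_mul]
      push_cast
      ring
    · simp [Matrix.diagonal_apply_ne _ hik, Matrix.one_apply_ne hik]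
  rw [← hdiag, Matrix.mul_add, Matrix.add_mul]
  congr 1
  · rw [Matrix.mul_smul, Matrix.mul_one, Matrix.smul_mul, unit_mul_star hW]
  · rw [Matrix.mul_smul, Matrix.smul_mul]

lemma smul_diagonal' (z : ℂ) (v : ι → ℂ) :
    z • Matrix.diagonal v = Matrix.diagonal (fun i => z * v i) := by
  ext i k
  rcases eq_or_ne i k with hik | hik
  · subst hik; simp
  · simp [Matrix.diagonal_apply_ne _ hik]

section Blocks

variable {p q : ℕ}

lemma P0_conj (M : Matrix (Fin p ⊕ Fin q) (Fin p ⊕ Fin q) ℂ) :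
    (Matrix.fromBlocks 1 0 0 0) * M * (Matrix.fromBlocks 1 0 0 0)
      = Matrix.fromBlocks (M.toBlocks₁₁) 0 0 0 := by
  conv_lhs => rw [← Matrix.fromBlocks_toBlocks M]
  rw [Matrix.fromBlocks_multiply, Matrix.fromBlocks_multiply]
  simp

lemma Q0_conj (M : Matrix (Fin p ⊕ Fin q) (Fin p ⊕ Fin q) ℂ) :
    (Matrix.fromBlocks 0 0 0 1) * M * (Matrix.fromBlocks 0 0 0 1)
      = Matrix.fromBlocks 0 0 0 (M.toBlocks₂₂) := by
  conv_lhs => rw [← Matrix.fromBlocks_toBlocks M]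
  rw [Matrix.fromBlocks_multiply, Matrix.fromBlocks_multiply]
  simp

lemma P0_herm : ((Matrix.fromBlocks 1 0 0 0 : Matrix (Fin p ⊕ Fin q) (Fin p ⊕ Fin q) ℂ))ᴴ
    = Matrix.fromBlocks 1 0 0 0 := by
  rw [Matrix.fromBlocks_conjTranspose]; simp

lemma Q0_herm : ((Matrix.fromBlocks 0 0 0 1 : Matrix (Fin p ⊕ Fin q) (Fin p ⊕ Fin q) ℂ))ᴴ
    = Matrix.fromBlocks 0 0 0 1 := by
  rw [Matrix.fromBlocks_conjTranspose]; simp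

lemma P0_idem : (Matrix.fromBlocks 1 0 0 0 : Matrix (Fin p ⊕ Fin q) (Fin p ⊕ Fin q) ℂ)
    * Matrix.fromBlocks 1 0 0 0 = Matrix.fromBlocks 1 0 0 0 := by
  rw [Matrix.fromBlocks_multiply]; simp

lemma Q0_idem : (Matrix.fromBlocks 0 0 0 1 : Matrix (Fin p ⊕ Fin q) (Fin p ⊕ Fin q) ℂ)
    * Matrix.fromBlocks 0 0 0 1 = Matrix.fromBlocks 0 0 0 1 := by
  rw [Matrix.fromBlocks_multiply]; simp

lemma P0_add_Q0 : (Matrix.fromBlocks 1 0 0 0 : Matrix (Fin p ⊕ Fin q) (Fin p ⊕ Fin q) ℂ)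
    + Matrix.fromBlocks 0 0 0 1 = 1 := by
  rw [Matrix.fromBlocks_add, ← Matrix.fromBlocks_one]
  simp

lemma Q0_smul_psd {c : ℝ} (hc : 0 ≤ c) :
    ((c:ℂ) • (Matrix.fromBlocks 0 0 0 1 : Matrix (Fin p ⊕ Fin q) (Fin p ⊕ Fin q) ℂ)).PosSemidef := by
  have hQdiag : (Matrix.fromBlocks 0 0 0 1 : Matrix (Fin p ⊕ Fin q) (Fin p ⊕ Fin q) ℂ)
      = Matrix.diagonal (Sum.elim (fun _ : Fin p => (0:ℂ)) (fun _ : Fin q => (1:ℂ))) := by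
    have := Matrix.fromBlocks_diagonal (fun _ : Fin p => (0:ℂ)) (fun _ : Fin q => (1:ℂ))
    rw [Matrix.diagonal_zero, Matrix.diagonal_one] at this
    exact this
  rw [hQdiag, smul_diagonal']
  refine Matrix.posSemidef_diagonal_iff.mpr fun i => ?_
  cases i with
  | inl j => simp
  | inr j => simpa using hc

lemma P0_smul_psd {c : ℝ} (hc : 0 ≤ c) :
    ((c:ℂ) • (Matrix.fromBlocks 1 0 0 0 : Matrix (Fin p ⊕ Fin q) (Fin p ⊕ Fin q) ℂ)).PosSemidef := by
  have hQdiag : (Matrix.fromBlocks 1 0 0 0 : Matrix (Fin p ⊕ Fin q) (Fin p ⊕ Fin q) ℂ)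
      = Matrix.diagonal (Sum.elim (fun _ : Fin p => (1:ℂ)) (fun _ : Fin q => (0:ℂ))) := by
    have := Matrix.fromBlocks_diagonal (fun _ : Fin p => (1:ℂ)) (fun _ : Fin q => (0:ℂ))
    rw [Matrix.diagonal_zero, Matrix.diagonal_one] at this
    exact this
  rw [hQdiag, smul_diagonal']
  refine Matrix.posSemidef_diagonal_iff.mpr fun i => ?_
  cases i with
  | inl j => simpa using hc
  | inr j => simp

lemma toBlocks₁₁_eq_submatrix (M : Matrix (Fin p ⊕ Fin q) (Fin p ⊕ Fin q) ℂ) :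
    M.toBlocks₁₁ = M.submatrix Sum.inl Sum.inl := rfl

lemma toBlocks₂₂_eq_submatrix (M : Matrix (Fin p ⊕ Fin q) (Fin p ⊕ Fin q) ℂ) :
    M.toBlocks₂₂ = M.submatrix Sum.inr Sum.inr := rfl

end Blocks


lemma herm_sa {M : Matrix ι ι ℂ} (h : M.IsHermitian) : IsSelfAdjoint M := h

section CornerBound

variable {p q NN : ℕ}

set_option maxHeartbeats 1600000 in
lemma corner_bound₁ (κ' : Fin p ⊕ Fin q ≃ Fin NN)
    (hκ' : ∀ j : Fin p, ((κ' (Sum.inl j)) : ℕ) = (j : ℕ))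
    {H : Matrix (Fin p ⊕ Fin q) (Fin p ⊕ Fin q) ℂ}
    {dH : Fin NN → ℝ} {W : Matrix (Fin p ⊕ Fin q) (Fin p ⊕ Fin q) ℂ}
    (hWmem : W ∈ Matrix.unitaryGroup (Fin p ⊕ Fin q) ℂ)
    (hdH : Antitone dH) (hdH0 : ∀ k, 0 ≤ dH k)
    (hHrep0 : H = W * Matrix.diagonal (fun i => (dH (κ' i) : ℂ)) * Wᴴ)
    {f : ℝ → ℝ} (hconc : ConcaveOn ℝ (Set.Ici (0:ℝ)) f)
    (hf0 : ∀ x : ℝ, 0 ≤ x → 0 ≤ f x)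
    {g : Matrix (Fin p ⊕ Fin q) (Fin p ⊕ Fin q) ℂ}
    (hgrep : g = W * Matrix.diagonal (fun i => ((Real.sqrt (f (dH (κ' i))) : ℝ) : ℂ)) * Wᴴ)
    (N : Matrix (Fin p ⊕ Fin q) (Fin p ⊕ Fin q) ℂ → ℝ)
    (hNadd : ∀ M₁ M₂, N (M₁ + M₂) ≤ N M₁ + N M₂)
    (hNsmul : ∀ (z : ℂ) M, N (z • M) = ‖z‖ * N M)
    (hNinv : ∀ U V : Matrix (Fin p ⊕ Fin q) (Fin p ⊕ Fin q) ℂ,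
      U ∈ Matrix.unitaryGroup (Fin p ⊕ Fin q) ℂ → V ∈ Matrix.unitaryGroup (Fin p ⊕ Fin q) ℂ →
      ∀ M, N (U * M * V) = N M) :
    N (g * (Matrix.fromBlocks 1 0 0 0) * g)
      ≤ N (Matrix.fromBlocks (cfc f (H.toBlocks₁₁)) 0 0 0) := by
  classical
  set P₀ : Matrix (Fin p ⊕ Fin q) (Fin p ⊕ Fin q) ℂ := Matrix.fromBlocks 1 0 0 0 with hP₀
  have hPH : P₀ᴴ = P₀ := by rw [hP₀]; exact P0_herm
  have hPP : P₀ * P₀ = P₀ := by rw [hP₀]; exact P0_idem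
  have hPC : ∀ M : Matrix (Fin p ⊕ Fin q) (Fin p ⊕ Fin q) ℂ,
      P₀ * M * P₀ = Matrix.fromBlocks M.toBlocks₁₁ 0 0 0 := by
    intro M; rw [hP₀]; exact P0_conj M
  have hHspec : HasSpec κ' H dH := ⟨W, hWmem, hHrep0⟩
  have hHpsd : H.PosSemidef := spec_posSemidef κ' hHspec hdH0
  set A' := H.toBlocks₁₁ with hA'
  have hA'psd : A'.PosSemidef := by
    rw [hA', toBlocks₁₁_eq_submatrix]; exact hHpsd.submatrix _
  obtain ⟨a, WA, ha, hWAmem, hArep⟩ := exists_spec_pair (Equiv.refl (Fin p)) hA'psd.1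
  have hArep0 : A' = WA * Matrix.diagonal (fun i => (a ((Equiv.refl (Fin p)) i) : ℂ)) * WAᴴ := by
    have h := hArep id
    rwa [cfc_id ℝ A' (herm_sa hA'psd.1)] at h
  have hAspec : HasSpec (Equiv.refl (Fin p)) A' a := ⟨WA, hWAmem, hArep0⟩
  have ha0 : ∀ j, 0 ≤ a j := spec_nonneg _ hA'psd hAspec
  have hmono := concave_mono hconc hf0
  set fa : Fin p → ℝ := fun j => f (a j) with hfa
  have hfa_anti : Antitone fa := fun j j' hjj' => hmono _ _ (ha0 j') (ha hjj')
  have hfa0 : ∀ j, 0 ≤ fa j := fun j => hf0 _ (ha0 j)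
  have htarget : HasSpec κ' (Matrix.fromBlocks (cfc f A') 0 0 0) (pad NN fa) :=
    hasSpec_corner₁ κ' hκ' ⟨WA, hWAmem, hArep f⟩
  set fM : Matrix (Fin p ⊕ Fin q) (Fin p ⊕ Fin q) ℂ :=
    W * Matrix.diagonal (fun i => ((f (dH (κ' i)) : ℝ) : ℂ)) * Wᴴ with hfM
  have hfMspec : HasSpec κ' fM (fun k => f (dH k)) := ⟨W, hWmem, hfM⟩
  have hfMpsd : fM.PosSemidef := spec_posSemidef κ' hfMspec (fun k => hf0 _ (hdH0 k))
  have hgg : g * g = fM := by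
    have hdd : (fun i => ((Real.sqrt (f (dH (κ' i))) : ℝ) : ℂ)
        * ((Real.sqrt (f (dH (κ' i))) : ℝ) : ℂ)) = fun i => ((f (dH (κ' i)) : ℝ) : ℂ) :=
      funext fun i => by rw [← Complex.ofReal_mul, Real.mul_self_sqrt (hf0 _ (hdH0 _))]
    rw [hgrep, hfM, conj_mul_conj hWmem, Matrix.diagonal_mul_diagonal, hdd]
  have hgspec : HasSpec κ' g (fun k => Real.sqrt (f (dH k))) := ⟨W, hWmem, hgrep⟩
  have hgherm : g.IsHermitian := spec_isHermitian κ' hgspec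
  set C' := fM.toBlocks₁₁ with hC'
  have hC'psd : C'.PosSemidef := by
    rw [hC', toBlocks₁₁_eq_submatrix]; exact hfMpsd.submatrix _
  obtain ⟨cv, WC, hcv, hWCmem, hCrep⟩ := exists_spec_pair (Equiv.refl (Fin p)) hC'psd.1
  have hCrep0 : C' = WC * Matrix.diagonal (fun i => (cv ((Equiv.refl (Fin p)) i) : ℂ)) * WCᴴ := by
    have h := hCrep id
    rwa [cfc_id ℝ C' (herm_sa hC'psd.1)] at h
  have hCspec : HasSpec (Equiv.refl (Fin p)) C' cv := ⟨WC, hWCmem, hCrep0⟩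
  have hcv0 : ∀ j, 0 ≤ cv j := spec_nonneg _ hC'psd hCspec
  have hcorner : HasSpec κ' (Matrix.fromBlocks C' 0 0 0) (pad NN cv) :=
    hasSpec_corner₁ κ' hκ' hCspec
  set R : Matrix (Fin p ⊕ Fin q) (Fin p ⊕ Fin q) ℂ := P₀ * g with hRdef
  have hRhR : Rᴴ * R = g * P₀ * g := by
    rw [hRdef, Matrix.conjTranspose_mul, hgherm.eq, hPH,
      Matrix.mul_assoc g P₀ (P₀ * g), ← Matrix.mul_assoc P₀ P₀ g, hPP, ← Matrix.mul_assoc]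
  have hRRh : R * Rᴴ = Matrix.fromBlocks C' 0 0 0 := by
    rw [hRdef, Matrix.conjTranspose_mul, hgherm.eq, hPH,
      Matrix.mul_assoc P₀ g (g * P₀), ← Matrix.mul_assoc g g P₀, hgg,
      ← Matrix.mul_assoc, hPC fM, ← hC']
  have hSpsd : (g * P₀ * g).PosSemidef := by
    rw [← hRhR]; exact Matrix.posSemidef_conjTranspose_mul_self R
  obtain ⟨dS, WS, hdS, hWSmem, hSrep⟩ := exists_spec_pair κ' hSpsd.1
  have hSrep0 : g * P₀ * g = WS * Matrix.diagonal (fun i => (dS (κ' i) : ℂ)) * WSᴴ := by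
    have h := hSrep id
    rwa [cfc_id ℝ _ (herm_sa hSpsd.1)] at h
  have hSspec : HasSpec κ' (g * P₀ * g) dS := ⟨WS, hWSmem, hSrep0⟩
  have hdS0 : ∀ k, 0 ≤ dS k := spec_nonneg _ hSpsd hSspec
  have hstep1 : ∀ k, dS k ≤ pad NN cv k := by
    refine spec_mul_comm κ' R hdS (pad_antitone hcv hcv0) ?_ ?_
    · rw [hRhR]; exact hSspec
    · rw [hRRh]; exact hcorner
  have hstep2 : ∀ k, pad NN cv k ≤ pad NN fa k := by
    intro k
    by_cases hk : (k : ℕ) < p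
    · set t := a ⟨k, hk⟩ with htdef
      have ht0 : 0 ≤ t := ha0 _
      obtain ⟨s, hs0, hst, hsup⟩ := supergrad hconc hf0 (Finset.image dH Finset.univ)
        (fun x hx => by
          obtain ⟨k', _, rfl⟩ := Finset.mem_image.mp hx
          exact hdH0 k') t ht0
      set c₁ : ℝ := f t - s * t with hc₁
      have hc₁0 : 0 ≤ c₁ := by simp only [hc₁]; linarith
      have hPHspec : HasSpec κ' (P₀ * H * P₀) (pad NN a) := by
        rw [hPC H, ← hA']
        exact hasSpec_corner₁ κ' hκ' hAspec
      obtain ⟨WP, hWPmem, hPrep0⟩ := hPHspec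
      set M3 : Matrix (Fin p ⊕ Fin q) (Fin p ⊕ Fin q) ℂ :=
        (c₁:ℂ) • 1 + (s:ℂ) • (P₀ * H * P₀) with hM3
      have hM3spec : HasSpec κ' M3 (fun k' => c₁ + s * pad NN a k') := by
        refine ⟨WP, hWPmem, ?_⟩
        rw [hM3, hPrep0]
        exact affine_rep hWPmem _ c₁ s
      have hM3anti : Antitone (fun k' => c₁ + s * pad NN a k') := by
        intro x y hxy
        have hpp := pad_antitone ha ha0 hxy
        dsimp only
        nlinarith
      have hd1 : (((c₁:ℂ) • 1 + (s:ℂ) • H) - fM).PosSemidef := by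
        rw [hHrep0, affine_rep hWmem _ c₁ s, hfM]
        refine psd_diff_diag hWmem (fun i => ?_)
        have hx := hsup (dH (κ' i)) (Finset.mem_image_of_mem dH (Finset.mem_univ _))
        simp only [hc₁]
        linarith
      have hd2 : (P₀ * ((c₁:ℂ) • 1 + (s:ℂ) • H) * P₀ - P₀ * fM * P₀).PosSemidef := by
        have h := hd1.conjTranspose_mul_mul_same P₀
        rwa [hPH, Matrix.mul_sub, Matrix.sub_mul] at h
      have hd3 : (M3 - P₀ * ((c₁:ℂ) • 1 + (s:ℂ) • H) * P₀).PosSemidef := by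
        have hexpand : P₀ * ((c₁:ℂ) • 1 + (s:ℂ) • H) * P₀
            = (c₁:ℂ) • (P₀ * P₀) + (s:ℂ) • (P₀ * H * P₀) := by
          rw [Matrix.mul_add, Matrix.add_mul, Matrix.mul_smul, Matrix.smul_mul,
            Matrix.mul_smul, Matrix.smul_mul, Matrix.mul_one]
        rw [hexpand, hPP, hM3]
        have hsub : (c₁:ℂ) • (1 : Matrix (Fin p ⊕ Fin q) (Fin p ⊕ Fin q) ℂ)
            + (s:ℂ) • (P₀ * H * P₀)
            - ((c₁:ℂ) • P₀ + (s:ℂ) • (P₀ * H * P₀)) = (c₁:ℂ) • (1 - P₀) := by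
          rw [smul_sub]; abel
        rw [hsub]
        have h1P : (1 : Matrix (Fin p ⊕ Fin q) (Fin p ⊕ Fin q) ℂ) - P₀
            = Matrix.fromBlocks 0 0 0 1 := by
          rw [hP₀, ← P0_add_Q0, add_sub_cancel_left]
        rw [h1P]
        exact Q0_smul_psd hc₁0
      have hdtot : (M3 - Matrix.fromBlocks C' 0 0 0).PosSemidef := by
        have h := hd3.add hd2
        rwa [sub_add_sub_cancel, hPC fM, ← hC'] at h
      have hmono2 := spec_mono κ' (pad_antitone hcv hcv0) hM3anti hcorner hM3spec hdtot k
      have hpa : pad NN a k = t := by unfold pad; rw [dif_pos hk]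
      have hle : pad NN cv k ≤ c₁ + s * t := by rw [← hpa]; exact hmono2
      have hft : c₁ + s * t = f t := by simp only [hc₁]; ring
      have hgoal : pad NN fa k = f t := by unfold pad; rw [dif_pos hk]
      rw [hgoal]
      rw [hft] at hle
      exact hle
    · unfold pad
      rw [dif_neg hk, dif_neg hk]
  exact n_mono κ' N hNadd hNsmul hNinv hSspec htarget hdS0
    (fun k => le_trans (hstep1 k) (hstep2 k))


set_option maxHeartbeats 1600000 in
lemma corner_bound₂ (κ' : Fin p ⊕ Fin q ≃ Fin NN)
    (hκ' : ∀ j : Fin q, ((κ' (Sum.inr j)) : ℕ) = (j : ℕ))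
    {H : Matrix (Fin p ⊕ Fin q) (Fin p ⊕ Fin q) ℂ}
    {dH : Fin NN → ℝ} {W : Matrix (Fin p ⊕ Fin q) (Fin p ⊕ Fin q) ℂ}
    (hWmem : W ∈ Matrix.unitaryGroup (Fin p ⊕ Fin q) ℂ)
    (hdH : Antitone dH) (hdH0 : ∀ k, 0 ≤ dH k)
    (hHrep0 : H = W * Matrix.diagonal (fun i => (dH (κ' i) : ℂ)) * Wᴴ)
    {f : ℝ → ℝ} (hconc : ConcaveOn ℝ (Set.Ici (0:ℝ)) f)
    (hf0 : ∀ x : ℝ, 0 ≤ x → 0 ≤ f x)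
    {g : Matrix (Fin p ⊕ Fin q) (Fin p ⊕ Fin q) ℂ}
    (hgrep : g = W * Matrix.diagonal (fun i => ((Real.sqrt (f (dH (κ' i))) : ℝ) : ℂ)) * Wᴴ)
    (N : Matrix (Fin p ⊕ Fin q) (Fin p ⊕ Fin q) ℂ → ℝ)
    (hNadd : ∀ M₁ M₂, N (M₁ + M₂) ≤ N M₁ + N M₂)
    (hNsmul : ∀ (z : ℂ) M, N (z • M) = ‖z‖ * N M)
    (hNinv : ∀ U V : Matrix (Fin p ⊕ Fin q) (Fin p ⊕ Fin q) ℂ,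
      U ∈ Matrix.unitaryGroup (Fin p ⊕ Fin q) ℂ → V ∈ Matrix.unitaryGroup (Fin p ⊕ Fin q) ℂ →
      ∀ M, N (U * M * V) = N M) :
    N (g * (Matrix.fromBlocks 0 0 0 1) * g)
      ≤ N (Matrix.fromBlocks 0 0 0 (cfc f (H.toBlocks₂₂))) := by
  classical
  set P₀ : Matrix (Fin p ⊕ Fin q) (Fin p ⊕ Fin q) ℂ := Matrix.fromBlocks 0 0 0 1 with hP₀
  have hPH : P₀ᴴ = P₀ := by rw [hP₀]; exact Q0_herm
  have hPP : P₀ * P₀ = P₀ := by rw [hP₀]; exact Q0_idem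
  have hPC : ∀ M : Matrix (Fin p ⊕ Fin q) (Fin p ⊕ Fin q) ℂ,
      P₀ * M * P₀ = Matrix.fromBlocks 0 0 0 M.toBlocks₂₂ := by
    intro M; rw [hP₀]; exact Q0_conj M
  have hHspec : HasSpec κ' H dH := ⟨W, hWmem, hHrep0⟩
  have hHpsd : H.PosSemidef := spec_posSemidef κ' hHspec hdH0
  set A' := H.toBlocks₂₂ with hA'
  have hA'psd : A'.PosSemidef := by
    rw [hA', toBlocks₂₂_eq_submatrix]; exact hHpsd.submatrix _
  obtain ⟨a, WA, ha, hWAmem, hArep⟩ := exists_spec_pair (Equiv.refl (Fin q)) hA'psd.1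
  have hArep0 : A' = WA * Matrix.diagonal (fun i => (a ((Equiv.refl (Fin q)) i) : ℂ)) * WAᴴ := by
    have h := hArep id
    rwa [cfc_id ℝ A' (herm_sa hA'psd.1)] at h
  have hAspec : HasSpec (Equiv.refl (Fin q)) A' a := ⟨WA, hWAmem, hArep0⟩
  have ha0 : ∀ j, 0 ≤ a j := spec_nonneg _ hA'psd hAspec
  have hmono := concave_mono hconc hf0
  set fa : Fin q → ℝ := fun j => f (a j) with hfa
  have hfa_anti : Antitone fa := fun j j' hjj' => hmono _ _ (ha0 j') (ha hjj')
  have hfa0 : ∀ j, 0 ≤ fa j := fun j => hf0 _ (ha0 j)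
  have htarget : HasSpec κ' (Matrix.fromBlocks 0 0 0 (cfc f A')) (pad NN fa) :=
    hasSpec_corner₂ κ' hκ' ⟨WA, hWAmem, hArep f⟩
  set fM : Matrix (Fin p ⊕ Fin q) (Fin p ⊕ Fin q) ℂ :=
    W * Matrix.diagonal (fun i => ((f (dH (κ' i)) : ℝ) : ℂ)) * Wᴴ with hfM
  have hfMspec : HasSpec κ' fM (fun k => f (dH k)) := ⟨W, hWmem, hfM⟩
  have hfMpsd : fM.PosSemidef := spec_posSemidef κ' hfMspec (fun k => hf0 _ (hdH0 k))
  have hgg : g * g = fM := by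
    have hdd : (fun i => ((Real.sqrt (f (dH (κ' i))) : ℝ) : ℂ)
        * ((Real.sqrt (f (dH (κ' i))) : ℝ) : ℂ)) = fun i => ((f (dH (κ' i)) : ℝ) : ℂ) :=
      funext fun i => by rw [← Complex.ofReal_mul, Real.mul_self_sqrt (hf0 _ (hdH0 _))]
    rw [hgrep, hfM, conj_mul_conj hWmem, Matrix.diagonal_mul_diagonal, hdd]
  have hgspec : HasSpec κ' g (fun k => Real.sqrt (f (dH k))) := ⟨W, hWmem, hgrep⟩
  have hgherm : g.IsHermitian := spec_isHermitian κ' hgspec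
  set C' := fM.toBlocks₂₂ with hC'
  have hC'psd : C'.PosSemidef := by
    rw [hC', toBlocks₂₂_eq_submatrix]; exact hfMpsd.submatrix _
  obtain ⟨cv, WC, hcv, hWCmem, hCrep⟩ := exists_spec_pair (Equiv.refl (Fin q)) hC'psd.1
  have hCrep0 : C' = WC * Matrix.diagonal (fun i => (cv ((Equiv.refl (Fin q)) i) : ℂ)) * WCᴴ := by
    have h := hCrep id
    rwa [cfc_id ℝ C' (herm_sa hC'psd.1)] at h
  have hCspec : HasSpec (Equiv.refl (Fin q)) C' cv := ⟨WC, hWCmem, hCrep0⟩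
  have hcv0 : ∀ j, 0 ≤ cv j := spec_nonneg _ hC'psd hCspec
  have hcorner : HasSpec κ' (Matrix.fromBlocks 0 0 0 C') (pad NN cv) :=
    hasSpec_corner₂ κ' hκ' hCspec
  set R : Matrix (Fin p ⊕ Fin q) (Fin p ⊕ Fin q) ℂ := P₀ * g with hRdef
  have hRhR : Rᴴ * R = g * P₀ * g := by
    rw [hRdef, Matrix.conjTranspose_mul, hgherm.eq, hPH,
      Matrix.mul_assoc g P₀ (P₀ * g), ← Matrix.mul_assoc P₀ P₀ g, hPP, ← Matrix.mul_assoc]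
  have hRRh : R * Rᴴ = Matrix.fromBlocks 0 0 0 C' := by
    rw [hRdef, Matrix.conjTranspose_mul, hgherm.eq, hPH,
      Matrix.mul_assoc P₀ g (g * P₀), ← Matrix.mul_assoc g g P₀, hgg,
      ← Matrix.mul_assoc, hPC fM, ← hC']
  have hSpsd : (g * P₀ * g).PosSemidef := by
    rw [← hRhR]; exact Matrix.posSemidef_conjTranspose_mul_self R
  obtain ⟨dS, WS, hdS, hWSmem, hSrep⟩ := exists_spec_pair κ' hSpsd.1
  have hSrep0 : g * P₀ * g = WS * Matrix.diagonal (fun i => (dS (κ' i) : ℂ)) * WSᴴ := by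
    have h := hSrep id
    rwa [cfc_id ℝ _ (herm_sa hSpsd.1)] at h
  have hSspec : HasSpec κ' (g * P₀ * g) dS := ⟨WS, hWSmem, hSrep0⟩
  have hdS0 : ∀ k, 0 ≤ dS k := spec_nonneg _ hSpsd hSspec
  have hstep1 : ∀ k, dS k ≤ pad NN cv k := by
    refine spec_mul_comm κ' R hdS (pad_antitone hcv hcv0) ?_ ?_
    · rw [hRhR]; exact hSspec
    · rw [hRRh]; exact hcorner
  have hstep2 : ∀ k, pad NN cv k ≤ pad NN fa k := by
    intro k
    by_cases hk : (k : ℕ) < q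
    · set t := a ⟨k, hk⟩ with htdef
      have ht0 : 0 ≤ t := ha0 _
      obtain ⟨s, hs0, hst, hsup⟩ := supergrad hconc hf0 (Finset.image dH Finset.univ)
        (fun x hx => by
          obtain ⟨k', _, rfl⟩ := Finset.mem_image.mp hx
          exact hdH0 k') t ht0
      set c₁ : ℝ := f t - s * t with hc₁
      have hc₁0 : 0 ≤ c₁ := by simp only [hc₁]; linarith
      have hPHspec : HasSpec κ' (P₀ * H * P₀) (pad NN a) := by
        rw [hPC H, ← hA']
        exact hasSpec_corner₂ κ' hκ' hAspec
      obtain ⟨WP, hWPmem, hPrep0⟩ := hPHspec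
      set M3 : Matrix (Fin p ⊕ Fin q) (Fin p ⊕ Fin q) ℂ :=
        (c₁:ℂ) • 1 + (s:ℂ) • (P₀ * H * P₀) with hM3
      have hM3spec : HasSpec κ' M3 (fun k' => c₁ + s * pad NN a k') := by
        refine ⟨WP, hWPmem, ?_⟩
        rw [hM3, hPrep0]
        exact affine_rep hWPmem _ c₁ s
      have hM3anti : Antitone (fun k' => c₁ + s * pad NN a k') := by
        intro x y hxy
        have hpp := pad_antitone ha ha0 hxy
        dsimp only
        nlinarith
      have hd1 : (((c₁:ℂ) • 1 + (s:ℂ) • H) - fM).PosSemidef := by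
        rw [hHrep0, affine_rep hWmem _ c₁ s, hfM]
        refine psd_diff_diag hWmem (fun i => ?_)
        have hx := hsup (dH (κ' i)) (Finset.mem_image_of_mem dH (Finset.mem_univ _))
        simp only [hc₁]
        linarith
      have hd2 : (P₀ * ((c₁:ℂ) • 1 + (s:ℂ) • H) * P₀ - P₀ * fM * P₀).PosSemidef := by
        have h := hd1.conjTranspose_mul_mul_same P₀
        rwa [hPH, Matrix.mul_sub, Matrix.sub_mul] at h
      have hd3 : (M3 - P₀ * ((c₁:ℂ) • 1 + (s:ℂ) • H) * P₀).PosSemidef := by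
        have hexpand : P₀ * ((c₁:ℂ) • 1 + (s:ℂ) • H) * P₀
            = (c₁:ℂ) • (P₀ * P₀) + (s:ℂ) • (P₀ * H * P₀) := by
          rw [Matrix.mul_add, Matrix.add_mul, Matrix.mul_smul, Matrix.smul_mul,
            Matrix.mul_smul, Matrix.smul_mul, Matrix.mul_one]
        rw [hexpand, hPP, hM3]
        have hsub : (c₁:ℂ) • (1 : Matrix (Fin p ⊕ Fin q) (Fin p ⊕ Fin q) ℂ)
            + (s:ℂ) • (P₀ * H * P₀)
            - ((c₁:ℂ) • P₀ + (s:ℂ) • (P₀ * H * P₀)) = (c₁:ℂ) • (1 - P₀) := by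
          rw [smul_sub]; abel
        rw [hsub]
        have h1P : (1 : Matrix (Fin p ⊕ Fin q) (Fin p ⊕ Fin q) ℂ) - P₀
            = Matrix.fromBlocks 1 0 0 0 := by
          rw [hP₀, ← P0_add_Q0, add_sub_cancel_right]
        rw [h1P]
        exact P0_smul_psd hc₁0
      have hdtot : (M3 - Matrix.fromBlocks 0 0 0 C').PosSemidef := by
        have h := hd3.add hd2
        rwa [sub_add_sub_cancel, hPC fM, ← hC'] at h
      have hmono2 := spec_mono κ' (pad_antitone hcv hcv0) hM3anti hcorner hM3spec hdtot k
      have hpa : pad NN a k = t := by unfold pad; rw [dif_pos hk]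
      have hle : pad NN cv k ≤ c₁ + s * t := by rw [← hpa]; exact hmono2
      have hft : c₁ + s * t = f t := by simp only [hc₁]; ring
      have hgoal : pad NN fa k = f t := by unfold pad; rw [dif_pos hk]
      rw [hgoal]
      rw [hft] at hle
      exact hle
    · unfold pad
      rw [dif_neg hk, dif_neg hk]
  exact n_mono κ' N hNadd hNsmul hNinv hSspec htarget hdS0
    (fun k => le_trans (hstep1 k) (hstep2 k))

end CornerBound

end BLAux


set_option maxHeartbeats 1600000 in
/-- **Norm inequality for concave functions of positive block matrices
(Bourin–Lee).** For a nonnegative concave `f` on `[0,∞)`, a positive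
semidefinite `H = [[A, X],[X*, B]]` and any unitarily invariant norm `N`
(blocks viewed inside the big space via padding with zeros),
`N(f(H)) ≤ N(f(A)) + N(f(B))`. -/
theorem norm_concave_block {n m : ℕ}
    {A : Matrix (Fin n) (Fin n) ℂ} {B : Matrix (Fin m) (Fin m) ℂ}
    {X : Matrix (Fin n) (Fin m) ℂ}
    (hH : (Matrix.fromBlocks A X Xᴴ B).PosSemidef)
    (f : ℝ → ℝ) (hconc : ConcaveOn ℝ (Set.Ici (0 : ℝ)) f)
    (hf0 : ∀ x : ℝ, 0 ≤ x → 0 ≤ f x)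
    (N : Matrix (Fin n ⊕ Fin m) (Fin n ⊕ Fin m) ℂ → ℝ)
    (hN0 : ∀ M, 0 ≤ N M)
    (hNadd : ∀ M₁ M₂, N (M₁ + M₂) ≤ N M₁ + N M₂)
    (hNsmul : ∀ (c : ℂ) M, N (c • M) = ‖c‖ * N M)
    (hNinv : ∀ U V : Matrix (Fin n ⊕ Fin m) (Fin n ⊕ Fin m) ℂ,
      U ∈ Matrix.unitaryGroup (Fin n ⊕ Fin m) ℂ →
      V ∈ Matrix.unitaryGroup (Fin n ⊕ Fin m) ℂ → ∀ M, N (U * M * V) = N M) :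
    N (cfc f (Matrix.fromBlocks A X Xᴴ B)) ≤
      N (Matrix.fromBlocks (cfc f A) 0 0 0) + N (Matrix.fromBlocks 0 0 0 (cfc f B)) := by
  classical
  set κ : Fin n ⊕ Fin m ≃ Fin (n + m) := finSumFinEquiv with hκdef
  have hκ₁ : ∀ j : Fin n, ((κ (Sum.inl j)) : ℕ) = (j : ℕ) := by
    intro j
    simp [hκdef, finSumFinEquiv_apply_left]
  set κB : Fin n ⊕ Fin m ≃ Fin (n + m) :=
    (Equiv.sumComm (Fin n) (Fin m)).trans (finSumFinEquiv.trans (finCongr (Nat.add_comm m n)))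
    with hκBdef
  have hκ₂ : ∀ j : Fin m, ((κB (Sum.inr j)) : ℕ) = (j : ℕ) := by
    intro j
    simp [hκBdef, finSumFinEquiv_apply_left]
  set H : Matrix (Fin n ⊕ Fin m) (Fin n ⊕ Fin m) ℂ := Matrix.fromBlocks A X Xᴴ B with hHdef
  have hHpsd : H.PosSemidef := hH
  have hHerm : H.IsHermitian := hHpsd.1
  obtain ⟨dH, W, hdH, hWmem, hHrep⟩ := BLAux.exists_spec_pair κ hHerm
  obtain ⟨dHB, WB, hdHB, hWBmem, hHrepB⟩ := BLAux.exists_spec_pair κB hHerm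
  have hHrep0 : H = W * Matrix.diagonal (fun i => (dH (κ i) : ℂ)) * Wᴴ := by
    have h := hHrep id
    rwa [cfc_id ℝ H (BLAux.herm_sa hHerm)] at h
  have hHrep0B : H = WB * Matrix.diagonal (fun i => (dHB (κB i) : ℂ)) * WBᴴ := by
    have h := hHrepB id
    rwa [cfc_id ℝ H (BLAux.herm_sa hHerm)] at h
  have hdH0 : ∀ k, 0 ≤ dH k := BLAux.spec_nonneg κ hHpsd ⟨W, hWmem, hHrep0⟩
  have hdHB0 : ∀ k, 0 ≤ dHB k := BLAux.spec_nonneg κB hHpsd ⟨WB, hWBmem, hHrep0B⟩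
  set g : Matrix (Fin n ⊕ Fin m) (Fin n ⊕ Fin m) ℂ := cfc (fun x => Real.sqrt (f x)) H
    with hgdef
  have hgrepA : g = W * Matrix.diagonal
      (fun i => ((Real.sqrt (f (dH (κ i))) : ℝ) : ℂ)) * Wᴴ := hHrep (fun x => Real.sqrt (f x))
  have hgrepB : g = WB * Matrix.diagonal
      (fun i => ((Real.sqrt (f (dHB (κB i))) : ℝ) : ℂ)) * WBᴴ := hHrepB (fun x => Real.sqrt (f x))
  have hgg : g * g = cfc f H := by
    have hdd : (fun i => ((Real.sqrt (f (dH (κ i))) : ℝ) : ℂ)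
        * ((Real.sqrt (f (dH (κ i))) : ℝ) : ℂ)) = fun i => ((f (dH (κ i)) : ℝ) : ℂ) :=
      funext fun i => by rw [← Complex.ofReal_mul, Real.mul_self_sqrt (hf0 _ (hdH0 _))]
    rw [hgrepA, hHrep f, BLAux.conj_mul_conj hWmem, Matrix.diagonal_mul_diagonal, hdd]
  have hST : g * (Matrix.fromBlocks 1 0 0 0) * g + g * (Matrix.fromBlocks 0 0 0 1) * g
      = cfc f H := by
    rw [← Matrix.add_mul, ← Matrix.mul_add, BLAux.P0_add_Q0, Matrix.mul_one, hgg]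
  have claimA := BLAux.corner_bound₁ κ hκ₁ hWmem hdH hdH0 hHrep0 hconc hf0 hgrepA
    N hNadd hNsmul hNinv
  have claimB := BLAux.corner_bound₂ κB hκ₂ hWBmem hdHB hdHB0 hHrep0B hconc hf0 hgrepB
    N hNadd hNsmul hNinv
  have hAblock : H.toBlocks₁₁ = A := by
    rw [hHdef]; exact Matrix.toBlocks_fromBlocks₁₁ A X Xᴴ B
  have hBblock : H.toBlocks₂₂ = B := by
    rw [hHdef]; exact Matrix.toBlocks_fromBlocks₂₂ A X Xᴴ B
  rw [hAblock] at claimA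
  rw [hBblock] at claimB
  calc N (cfc f H) = N (g * (Matrix.fromBlocks 1 0 0 0) * g
        + g * (Matrix.fromBlocks 0 0 0 1) * g) := by rw [hST]
    _ ≤ N (g * (Matrix.fromBlocks 1 0 0 0) * g)
        + N (g * (Matrix.fromBlocks 0 0 0 1) * g) := hNadd _ _
    _ ≤ N (Matrix.fromBlocks (cfc f A) 0 0 0)
        + N (Matrix.fromBlocks 0 0 0 (cfc f B)) := add_le_add claimA claimB
end

section
/- For every positive semidefinite block matrix H = [[A, X],[X*, B]] with blocks in M_n(ℂ) and every concave function f on [0,∞), one has Tr f(H) ≤ Tr f(A) + Tr f(B). In particular (with f = log), the Fischer inequality det H ≤ det A · det B holds. -/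
open Matrix ComplexOrder

private lemma trace_cfc_eq {m : Type*} [Fintype m] [DecidableEq m]
    {M : Matrix m m ℂ} (hM : M.IsHermitian) (f : ℝ → ℝ) :
    (cfc f M).trace = ((∑ i, f (hM.eigenvalues i) : ℝ) : ℂ) := by
  rw [hM.cfc_eq, Matrix.IsHermitian.cfc, Unitary.conjStarAlgAut_apply, Matrix.trace_mul_cycle]
  rw [Unitary.coe_star_mul_self]
  rw [one_mul, Matrix.trace_diagonal]
  push_cast
  rfl

private lemma pinch_sum {m : Type*} [Fintype m] [DecidableEq m]
    {M : Matrix m m ℂ} (hM : M.PosSemidef) {V : Matrix m m ℂ}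
    (hV1 : star V * V = 1) (hV2 : V * star V = 1)
    {f : ℝ → ℝ} (hconc : ConcaveOn ℝ (Set.Ici (0 : ℝ)) f) :
    ∑ j, f (hM.1.eigenvalues j) ≤ ∑ i, f (((star V) * M * V) i i).re := by
  set μ := hM.1.eigenvalues with hμ
  set U := (hM.1.eigenvectorUnitary : Matrix m m ℂ) with hU
  set W := star U * V with hW
  have hUU : U * star U = 1 := Unitary.mul_star_self_of_mem (SetLike.coe_mem _)
  have hUU' : star U * U = 1 := Unitary.star_mul_self_of_mem (SetLike.coe_mem _)
  have hW1 : star W * W = 1 := by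
    rw [hW, StarMul.star_mul, star_star, Matrix.mul_assoc, ← Matrix.mul_assoc U, hUU, Matrix.one_mul, hV1]
  have hW2 : W * star W = 1 := by
    rw [hW, StarMul.star_mul, star_star, Matrix.mul_assoc, ← Matrix.mul_assoc V, hV2, Matrix.one_mul, hUU']
  have hrw : star V * M * V = star W * Matrix.diagonal (RCLike.ofReal ∘ μ) * W := by
    rw [hM.1.spectral_theorem, Unitary.conjStarAlgAut_apply]
    simp only [hW, StarMul.star_mul, star_star, Matrix.mul_assoc, hμ, hU]
  have hdiag : ∀ i, ((star V * M * V) i i).re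
      = ∑ j, Complex.normSq (W j i) * μ j := by
    intro i
    rw [hrw, Matrix.mul_assoc, Matrix.mul_apply]
    rw [Complex.re_sum]
    refine Finset.sum_congr rfl fun j _ => ?_
    rw [Matrix.star_apply, Matrix.diagonal_mul]
    have : (star (W j i) * ((RCLike.ofReal ∘ μ) j * W j i))
        = ((μ j * Complex.normSq (W j i) : ℝ) : ℂ) := by
      simp only [Function.comp_apply, RCLike.ofReal_alg, Complex.star_def]
      rw [show (starRingEnd ℂ) (W j i) * ((μ j : ℝ) • (1:ℂ) * W j i)
          = ((μ j : ℝ) • (1:ℂ)) * ((starRingEnd ℂ) (W j i) * W j i) by ring,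
        ← Complex.normSq_eq_conj_mul_self]
      rw [Complex.real_smul]
      push_cast
      ring
    rw [this, Complex.ofReal_re]
    ring
  have hcol : ∀ i, ∑ j, Complex.normSq (W j i) = 1 := by
    intro i
    have h := congrArg (fun N : Matrix m m ℂ => (N i i).re) hW1
    simpa [Matrix.mul_apply, Matrix.star_apply, Matrix.one_apply,
      Complex.re_sum, ← Complex.normSq_eq_conj_mul_self] using h
  have hrow : ∀ j, ∑ i, Complex.normSq (W j i) = 1 := by
    intro j
    have h := congrArg (fun N : Matrix m m ℂ => (N j j).re) hW2
    simpa [Matrix.mul_apply, Matrix.star_apply, Matrix.one_apply,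
      Complex.re_sum, Complex.mul_conj] using h
  have hjen : ∀ i, ∑ j, Complex.normSq (W j i) * f (μ j)
      ≤ f (∑ j, Complex.normSq (W j i) * μ j) := by
    intro i
    have := hconc.le_map_sum (t := Finset.univ) (w := fun j => Complex.normSq (W j i))
      (p := μ) (fun j _ => Complex.normSq_nonneg _) (hcol i)
      (fun j _ => hM.eigenvalues_nonneg j)
    simpa [smul_eq_mul] using this
  calc ∑ j, f (μ j) = ∑ j, ∑ i, Complex.normSq (W j i) * f (μ j) := by
        refine Finset.sum_congr rfl fun j _ => ?_
        rw [← Finset.sum_mul, hrow j, one_mul]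
    _ = ∑ i, ∑ j, Complex.normSq (W j i) * f (μ j) := Finset.sum_comm
    _ ≤ ∑ i, f (∑ j, Complex.normSq (W j i) * μ j) :=
        Finset.sum_le_sum fun i _ => hjen i
    _ = ∑ i, f (((star V) * M * V) i i).re := by
        refine Finset.sum_congr rfl fun i _ => ?_
        rw [hdiag i]
private lemma key_sum {n : ℕ} {A B X : Matrix (Fin n) (Fin n) ℂ}
    (hH : (Matrix.fromBlocks A X Xᴴ B).PosSemidef)
    (hA : A.PosSemidef) (hB : B.PosSemidef)
    {f : ℝ → ℝ} (hconc : ConcaveOn ℝ (Set.Ici (0 : ℝ)) f) :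
    ∑ i, f (hH.1.eigenvalues i) ≤ (∑ i, f (hA.1.eigenvalues i)) + ∑ i, f (hB.1.eigenvalues i) := by
  set P := (hA.1.eigenvectorUnitary : Matrix (Fin n) (Fin n) ℂ) with hP
  set Q := (hB.1.eigenvectorUnitary : Matrix (Fin n) (Fin n) ℂ) with hQ
  have hPP : star P * P = 1 := Unitary.star_mul_self_of_mem (SetLike.coe_mem _)
  have hPP' : P * star P = 1 := Unitary.mul_star_self_of_mem (SetLike.coe_mem _)
  have hQQ : star Q * Q = 1 := Unitary.star_mul_self_of_mem (SetLike.coe_mem _)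
  have hQQ' : Q * star Q = 1 := Unitary.mul_star_self_of_mem (SetLike.coe_mem _)
  set V := Matrix.fromBlocks P 0 0 Q with hV
  have hVs : star V = Matrix.fromBlocks (star P) 0 0 (star Q) := by
    simp [hV, Matrix.star_eq_conjTranspose, Matrix.fromBlocks_conjTranspose]
  have hV1 : star V * V = 1 := by
    rw [hVs, hV, Matrix.fromBlocks_multiply]
    simp [hPP, hQQ, Matrix.fromBlocks_one]
  have hV2 : V * star V = 1 := by
    rw [hVs, hV, Matrix.fromBlocks_multiply]
    simp [hPP', hQQ', Matrix.fromBlocks_one]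
  have hmain := pinch_sum hH hV1 hV2 hconc
  have hblock : star V * (Matrix.fromBlocks A X Xᴴ B) * V =
      Matrix.fromBlocks (Matrix.diagonal (RCLike.ofReal ∘ hA.1.eigenvalues)) (star P * X * Q)
        (star Q * Xᴴ * P) (Matrix.diagonal (RCLike.ofReal ∘ hB.1.eigenvalues)) := by
    rw [hVs, hV, Matrix.fromBlocks_multiply, Matrix.fromBlocks_multiply]
    rw [← (by simpa using hA.1.conjStarAlgAut_star_eigenvectorUnitary :
        star P * A * P = Matrix.diagonal (RCLike.ofReal ∘ hA.1.eigenvalues)),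
      ← (by simpa using hB.1.conjStarAlgAut_star_eigenvectorUnitary :
        star Q * B * Q = Matrix.diagonal (RCLike.ofReal ∘ hB.1.eigenvalues))]
    congr 1 <;> simp [Matrix.mul_assoc]
  rw [hblock] at hmain
  refine hmain.trans_eq ?_
  rw [Fintype.sum_sum_type]
  congr 1 <;> refine Finset.sum_congr rfl fun i _ => ?_ <;>
    simp [Matrix.fromBlocks_apply₁₁, Matrix.fromBlocks_apply₂₂, Matrix.diagonal_apply_eq]
private lemma log_shift_concave {ε : ℝ} (hε : 0 < ε) :
    ConcaveOn ℝ (Set.Ici (0 : ℝ)) fun x : ℝ => Real.log (x + ε) := by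
  have h := strictConcaveOn_log_Ioi.concaveOn
  have h2 := h.comp_affineMap (AffineMap.id ℝ ℝ + AffineMap.const ℝ ℝ ε)
  have h3 : ((fun x : ℝ => Real.log x) ∘ ⇑(AffineMap.id ℝ ℝ + AffineMap.const ℝ ℝ ε))
      = fun x : ℝ => Real.log (x + ε) := by
    funext x; simp
  rw [h3] at h2
  refine h2.subset ?_ (convex_Ici 0)
  intro x hx
  simp only [Set.mem_preimage, AffineMap.coe_add, AffineMap.coe_id, AffineMap.coe_const,
    Pi.add_apply, id_eq, Function.const_apply, Set.mem_Ioi]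
  have : (0:ℝ) ≤ x := hx
  linarith

/-- **Rotfel'd-type trace inequality for block matrices, and Fischer's
inequality.** For a positive semidefinite `H = [[A, X],[X*, B]]` with blocks in
`M_n` and any concave `f` on `[0,∞)`, `Tr f(H) ≤ Tr f(A) + Tr f(B)`; moreover
`det H ≤ det A · det B`. -/
theorem trace_concave_block_and_fischer {n : ℕ}
    {A B : Matrix (Fin n) (Fin n) ℂ} {X : Matrix (Fin n) (Fin n) ℂ}
    (hH : (Matrix.fromBlocks A X Xᴴ B).PosSemidef)
    (f : ℝ → ℝ) (hconc : ConcaveOn ℝ (Set.Ici (0 : ℝ)) f) :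
    (cfc f (Matrix.fromBlocks A X Xᴴ B)).trace ≤ (cfc f A).trace + (cfc f B).trace ∧
    (Matrix.fromBlocks A X Xᴴ B).det ≤ A.det * B.det := by
  have hA : A.PosSemidef := by
    have h := hH.submatrix (Sum.inl : Fin n → Fin n ⊕ Fin n)
    have he : (Matrix.fromBlocks A X Xᴴ B).submatrix Sum.inl Sum.inl = A := by
      ext i j; simp
    rwa [he] at h
  have hB : B.PosSemidef := by
    have h := hH.submatrix (Sum.inr : Fin n → Fin n ⊕ Fin n)
    have he : (Matrix.fromBlocks A X Xᴴ B).submatrix Sum.inr Sum.inr = B := by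
      ext i j; simp
    rwa [he] at h
  constructor
  · rw [trace_cfc_eq hH.1 f, trace_cfc_eq hA.1 f, trace_cfc_eq hB.1 f, ← Complex.ofReal_add,
      Complex.real_le_real]
    exact key_sum hH hA hB hconc
  · rw [hH.1.det_eq_prod_eigenvalues, hA.1.det_eq_prod_eigenvalues, hB.1.det_eq_prod_eigenvalues]
    set a := hA.1.eigenvalues with ha
    set b := hB.1.eigenvalues with hb
    set c := hH.1.eigenvalues with hc
    have heps : ∀ ε : ℝ, 0 < ε →
        ∏ k, (c k + ε) ≤ (∏ i, (a i + ε)) * ∏ i, (b i + ε) := by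
      intro ε hε
      have hk := key_sum hH hA hB (log_shift_concave hε)
      have h2 := Real.exp_le_exp.mpr hk
      rw [Real.exp_add, Real.exp_sum, Real.exp_sum, Real.exp_sum] at h2
      have hposc : ∀ k, 0 < c k + ε := fun k => by
        have := hH.eigenvalues_nonneg k; rw [← hc] at this; linarith
      have hposa : ∀ k, 0 < a k + ε := fun k => by
        have := hA.eigenvalues_nonneg k; rw [← ha] at this; linarith
      have hposb : ∀ k, 0 < b k + ε := fun k => by
        have := hB.eigenvalues_nonneg k; rw [← hb] at this; linarith
      calc ∏ k, (c k + ε) = ∏ k, Real.exp (Real.log (c k + ε)) := by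
            exact Finset.prod_congr rfl fun k _ => (Real.exp_log (hposc k)).symm
        _ ≤ (∏ i, Real.exp (Real.log (a i + ε))) * ∏ i, Real.exp (Real.log (b i + ε)) := h2
        _ = (∏ i, (a i + ε)) * ∏ i, (b i + ε) := by
            rw [Finset.prod_congr rfl fun k _ => Real.exp_log (hposa k),
              Finset.prod_congr rfl fun k _ => Real.exp_log (hposb k)]
    have hcont : ∀ {m : Type} [Fintype m], ∀ d : m → ℝ,
        Filter.Tendsto (fun ε : ℝ => ∏ k, (d k + ε)) (nhdsWithin 0 (Set.Ioi 0))
          (nhds (∏ k, d k)) := by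
      intro m _ d
      have hc2 : Continuous fun ε : ℝ => ∏ k, (d k + ε) := by
        apply continuous_finset_prod
        intro i _
        exact continuous_const.add continuous_id
      have := (hc2.tendsto 0).mono_left (nhdsWithin_le_nhds (s := Set.Ioi (0:ℝ)))
      simpa using this
    have hreal : ∏ k, c k ≤ (∏ i, a i) * ∏ i, b i := by
      refine le_of_tendsto_of_tendsto (hcont c) ((hcont a).mul (hcont b)) ?_
      filter_upwards [self_mem_nhdsWithin] with ε hε
      exact heps ε hε
    exact_mod_cast hreal
end

section
/- Let A = (a_{i,j}) be a positive semidefinite matrix in M_n(ℂ). Then A can be written as A = Σ_{i=1}^n a_{i,i} F_i for some rank-one orthogonal projections F_1, …, F_n in M_n(ℂ). -/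
open Matrix ComplexOrder

lemma rank_vecMulVec_le' {n : ℕ} (w v : Fin n → ℂ) :
    (Matrix.vecMulVec w v).rank ≤ 1 := by
  rw [Matrix.vecMulVec_eq (Fin 1)]
  calc (Matrix.replicateCol (Fin 1) w * Matrix.replicateRow (Fin 1) v).rank
      ≤ (Matrix.replicateRow (Fin 1) v).rank := Matrix.rank_mul_le_right _ _
    _ ≤ Fintype.card (Fin 1) := Matrix.rank_le_card_height _
    _ = 1 := Fintype.card_fin 1

/-- A positive semidefinite matrix is a combination `A = Σᵢ aᵢᵢ Fᵢ` of rank-one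
orthogonal projections weighted by its diagonal entries (rank `≤ 1` being
allowed when `aᵢᵢ = 0`). -/
theorem posSemidef_eq_sum_diag_smul_projections {n : ℕ}
    {A : Matrix (Fin n) (Fin n) ℂ} (hA : A.PosSemidef) :
    ∃ F : Fin n → Matrix (Fin n) (Fin n) ℂ,
      (∀ i, (F i).IsHermitian) ∧ (∀ i, F i * F i = F i) ∧ (∀ i, (F i).rank ≤ 1) ∧
      A = ∑ i, A i i • F i := by
  classical
  set S := (open scoped MatrixOrder in CFC.sqrt A) with hSdef
  have hSS : S * S = A := open scoped MatrixOrder in CFC.sqrt_mul_sqrt_self A hA.nonneg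
  have hSherm : S.IsHermitian := open scoped MatrixOrder in (CFC.sqrt_nonneg A).posSemidef.isHermitian
  -- columns of the square root
  set c : Fin n → Fin n → ℂ := fun i j => S j i with hc
  have key : ∀ i, ∑ l, star (c i l) * c i l = A i i := by
    intro i
    rw [← hSS, Matrix.mul_apply]
    refine Finset.sum_congr rfl fun l _ => ?_
    simp only [hc]
    rw [hSherm.apply i l]
  -- if the diagonal entry vanishes, the whole column vanishes
  have hzero : ∀ i, A i i = 0 → c i = 0 := by
    intro i h0
    refine dotProduct_star_self_eq_zero.mp ?_
    simpa [dotProduct] using (key i).trans h0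
  -- the real diagonal
  have hreal : ∀ i, star (A i i) = A i i := fun i => hA.isHermitian.apply i i
  refine ⟨fun i => Matrix.vecMulVec ((A i i)⁻¹ • c i) (star (c i)), ?_, ?_, ?_, ?_⟩
  · -- Hermitian
    intro i
    ext j k
    simp only [Matrix.conjTranspose_apply, Matrix.vecMulVec_apply, Pi.smul_apply,
      Pi.star_apply, smul_eq_mul, star_mul', star_star]
    rw [star_inv₀, hreal i]
    ring
  · -- idempotent
    intro i
    by_cases h0 : A i i = 0
    · ext j k
      simp [Matrix.mul_apply, Matrix.vecMulVec_apply, hzero i h0]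
    · ext j k
      simp only [Matrix.mul_apply, Matrix.vecMulVec_apply, Pi.smul_apply,
        Pi.star_apply, smul_eq_mul]
      have hterm : ∀ l, (A i i)⁻¹ * c i j * star (c i l) * ((A i i)⁻¹ * c i l * star (c i k))
          = ((A i i)⁻¹ * c i j * star (c i k) * (A i i)⁻¹) * (star (c i l) * c i l) :=
        fun l => by ring
      rw [Finset.sum_congr rfl fun l _ => hterm l, ← Finset.mul_sum, key i,
        mul_assoc, inv_mul_cancel₀ h0, mul_one]
  · -- rank ≤ 1
    intro i
    exact rank_vecMulVec_le' _ _
  · -- the sum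
    have hterm : ∀ i, A i i • Matrix.vecMulVec ((A i i)⁻¹ • c i) (star (c i))
        = Matrix.vecMulVec (c i) (star (c i)) := by
      intro i
      by_cases h0 : A i i = 0
      · ext j k
        simp [Matrix.vecMulVec_apply, hzero i h0]
      · ext j k
        simp only [Matrix.smul_apply, Matrix.vecMulVec_apply, Pi.smul_apply,
          Pi.star_apply, smul_eq_mul]
        field_simp
    simp only [hterm]
    ext j k
    rw [Matrix.sum_apply, ← hSS, Matrix.mul_apply]
    refine Finset.sum_congr rfl fun i _ => ?_
    simp only [Matrix.vecMulVec_apply, Pi.star_apply, hc]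
    rw [hSherm.apply i k]
end

section
/- Let g : [0,∞) → [0,∞) be convex with g(0) = 0, and A, B ∈ M_n(ℂ)^+. Then det^{1/n} g(A+B) ≥ det^{1/n} g(A) + det^{1/n} g(B). -/
open Matrix ComplexOrder

section Helpers

variable {n : ℕ}

/-! ### Dot product expansion helpers -/

private lemma dot_sum_left' {ι : Type*} (s : Finset ι) (f : ι → Fin n → ℂ) (w : Fin n → ℂ) :
    (∑ j ∈ s, f j) ⬝ᵥ w = ∑ j ∈ s, f j ⬝ᵥ w := by
  simp only [dotProduct, Finset.sum_apply, Finset.sum_mul]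
  exact Finset.sum_comm

private lemma dot_sum_right' {ι : Type*} (s : Finset ι) (f : ι → Fin n → ℂ) (w : Fin n → ℂ) :
    w ⬝ᵥ (∑ j ∈ s, f j) = ∑ j ∈ s, w ⬝ᵥ f j := by
  simp only [dotProduct, Finset.sum_apply, Finset.mul_sum]
  exact Finset.sum_comm

private lemma orth_dot {A : Matrix (Fin n) (Fin n) ℂ} (hA : A.IsHermitian) (i j : Fin n) :
    star ⇑(hA.eigenvectorBasis i) ⬝ᵥ ⇑(hA.eigenvectorBasis j) = if i = j then 1 else 0 := by
  have h := hA.eigenvectorBasis.orthonormal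
  rw [orthonormal_iff_ite] at h
  rw [← h i j, EuclideanSpace.inner_eq_star_dotProduct]
  exact dotProduct_comm _ _

private lemma quad_expand {A : Matrix (Fin n) (Fin n) ℂ} (hA : A.IsHermitian)
    (s : Finset (Fin n)) (c : Fin n → ℂ) :
    star (∑ i ∈ s, c i • ⇑(hA.eigenvectorBasis i)) ⬝ᵥ
      A *ᵥ (∑ i ∈ s, c i • ⇑(hA.eigenvectorBasis i)) =
      ((∑ i ∈ s, hA.eigenvalues i * ‖c i‖ ^ 2 : ℝ) : ℂ) := by
  have hmv : A *ᵥ (∑ i ∈ s, c i • ⇑(hA.eigenvectorBasis i))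
      = ∑ i ∈ s, (c i * (hA.eigenvalues i : ℂ)) • ⇑(hA.eigenvectorBasis i) := by
    rw [← mulVecLin_apply, map_sum]
    refine Finset.sum_congr rfl fun i _ => ?_
    rw [_root_.map_smul, mulVecLin_apply, hA.mulVec_eigenvectorBasis]
    ext k
    simp [Complex.real_smul]
    ring
  rw [hmv, star_sum]
  simp only [star_smul]
  rw [dot_sum_left']
  simp only [dot_sum_right', smul_dotProduct, dotProduct_smul, orth_dot hA]
  simp only [mul_ite, mul_one, mul_zero, smul_eq_mul, Finset.sum_ite_eq, Finset.mul_sum]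
  rw [Complex.ofReal_sum]
  refine Finset.sum_congr rfl fun j hj => ?_
  simp only [hj, if_pos]
  rw [← mul_assoc, Complex.star_def, Complex.conj_mul']
  push_cast
  ring

private lemma norm_expand {A : Matrix (Fin n) (Fin n) ℂ} (hA : A.IsHermitian)
    (s : Finset (Fin n)) (c : Fin n → ℂ) :
    star (∑ i ∈ s, c i • ⇑(hA.eigenvectorBasis i)) ⬝ᵥ
      (∑ i ∈ s, c i • ⇑(hA.eigenvectorBasis i)) =
      ((∑ i ∈ s, ‖c i‖ ^ 2 : ℝ) : ℂ) := by
  rw [star_sum]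
  simp only [star_smul]
  rw [dot_sum_left']
  simp only [dot_sum_right', smul_dotProduct, dotProduct_smul, orth_dot hA]
  simp only [mul_ite, mul_one, mul_zero, smul_eq_mul, Finset.sum_ite_eq, Finset.mul_sum]
  rw [Complex.ofReal_sum]
  refine Finset.sum_congr rfl fun j hj => ?_
  simp only [hj, if_pos]
  rw [Complex.star_def, Complex.conj_mul']
  push_cast
  ring

private lemma eigLI {A : Matrix (Fin n) (Fin n) ℂ} (hA : A.IsHermitian) (s : Finset (Fin n)) :
    LinearIndependent ℂ (fun i : ↥s => ⇑(hA.eigenvectorBasis i)) := by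
  rw [Fintype.linearIndependent_iff]
  intro c hc j
  have h2 : star ⇑(hA.eigenvectorBasis (j : Fin n)) ⬝ᵥ
      (∑ i : ↥s, c i • ⇑(hA.eigenvectorBasis (i : Fin n))) = 0 := by
    rw [hc, dotProduct_zero]
  rw [dot_sum_right'] at h2
  simp only [dotProduct_smul, orth_dot hA, smul_eq_mul, mul_ite, mul_one, mul_zero] at h2
  have h3 : (∑ i : ↥s, if j = i then c i else 0) = 0 := by
    rw [← h2]
    refine Finset.sum_congr rfl fun i _ => ?_
    congr 1
    rw [Subtype.ext_iff]
  rwa [Finset.sum_ite_eq Finset.univ j c, if_pos (Finset.mem_univ j)] at h3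

private lemma rep_of_mem_span {A : Matrix (Fin n) (Fin n) ℂ} (hA : A.IsHermitian)
    (s : Finset (Fin n)) {x : Fin n → ℂ}
    (hx : x ∈ Submodule.span ℂ (Set.range (fun i : ↥s => ⇑(hA.eigenvectorBasis i)))) :
    ∃ c : Fin n → ℂ, x = ∑ i ∈ s, c i • ⇑(hA.eigenvectorBasis i) := by
  rw [Submodule.mem_span_range_iff_exists_fun] at hx
  obtain ⟨c, hc⟩ := hx
  refine ⟨fun k => if h : k ∈ s then c ⟨k, h⟩ else 0, ?_⟩
  rw [← hc, ← Finset.sum_attach s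
    (fun i => (fun k => if h : k ∈ s then c ⟨k, h⟩ else 0) i • ⇑(hA.eigenvectorBasis i))]
  refine (Finset.sum_congr rfl fun i _ => ?_).symm
  simp [i.2]

/-- Counting form of Weyl's eigenvalue monotonicity: if `S - A` is positive semidefinite,
then for each `t` the number of eigenvalues of `A` exceeding `t` is at most the corresponding
number for `S`. -/
private lemma count_lt_le {A S : Matrix (Fin n) (Fin n) ℂ} (hA : A.IsHermitian)
    (hS : S.IsHermitian) (hle : (S - A).PosSemidef) (t : ℝ) :
    (Finset.univ.filter fun i => t < hA.eigenvalues i).card ≤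
      (Finset.univ.filter fun i => t < hS.eigenvalues i).card := by
  by_contra hcon
  push_neg at hcon
  set s : Finset (Fin n) := Finset.univ.filter (fun i => t < hA.eigenvalues i) with hs
  set r : Finset (Fin n) := Finset.univ.filter (fun i => ¬ t < hS.eigenvalues i) with hr
  have hrcard : (Finset.univ.filter fun i => t < hS.eigenvalues i).card + r.card = n := by
    rw [hr, Finset.card_filter_add_card_filter_not]
    simp
  set V := Submodule.span ℂ (Set.range (fun i : ↥s => ⇑(hA.eigenvectorBasis i))) with hV
  set W := Submodule.span ℂ (Set.range (fun i : ↥r => ⇑(hS.eigenvectorBasis i))) with hW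
  have hVrank : Module.finrank ℂ V = s.card := by
    rw [hV, finrank_span_eq_card (eigLI hA s), Fintype.card_coe]
  have hWrank : Module.finrank ℂ W = r.card := by
    rw [hW, finrank_span_eq_card (eigLI hS r), Fintype.card_coe]
  have htot : Module.finrank ℂ (Fin n → ℂ) = n := by
    simp
  have hsup : Module.finrank ℂ ↥(V ⊔ W) ≤ n := le_trans (Submodule.finrank_le _) (le_of_eq htot)
  have hdim := Submodule.finrank_sup_add_finrank_inf_eq V W
  have hpos : 0 < Module.finrank ℂ ↥(V ⊓ W) := by omega
  haveI : Nontrivial ↥(V ⊓ W) := Module.nontrivial_of_finrank_pos hpos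
  obtain ⟨⟨x, hxmem⟩, hxne⟩ := exists_ne (0 : ↥(V ⊓ W))
  have hx0 : x ≠ 0 := by
    intro h
    exact hxne (Subtype.ext h)
  obtain ⟨c, hcrep⟩ := rep_of_mem_span hA s hxmem.1
  obtain ⟨d, hdrep⟩ := rep_of_mem_span hS r hxmem.2
  have hNorm : ((∑ i ∈ s, ‖c i‖ ^ 2 : ℝ) : ℂ) = ((∑ j ∈ r, ‖d j‖ ^ 2 : ℝ) : ℂ) := by
    rw [← norm_expand hA s c, ← norm_expand hS r d, ← hcrep, ← hdrep]
  rw [Complex.ofReal_inj] at hNorm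
  have hex : ∃ i ∈ s, c i ≠ 0 := by
    by_contra hno
    push_neg at hno
    apply hx0
    rw [hcrep]
    exact Finset.sum_eq_zero fun i hi => by rw [hno i hi, zero_smul]
  obtain ⟨i₀, hi₀s, hi₀⟩ := hex
  have hQA : t * (∑ i ∈ s, ‖c i‖ ^ 2) < ∑ i ∈ s, hA.eigenvalues i * ‖c i‖ ^ 2 := by
    rw [Finset.mul_sum]
    refine Finset.sum_lt_sum (fun i hi => ?_) ⟨i₀, hi₀s, ?_⟩
    · have : t ≤ hA.eigenvalues i := le_of_lt (by simpa [hs] using hi)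
      exact mul_le_mul_of_nonneg_right this (by positivity)
    · have h1 : t < hA.eigenvalues i₀ := by simpa [hs] using hi₀s
      have h2 : (0:ℝ) < ‖c i₀‖ ^ 2 := by
        have := norm_pos_iff.mpr hi₀
        positivity
      exact mul_lt_mul_of_pos_right h1 h2
  have hQS : (∑ j ∈ r, hS.eigenvalues j * ‖d j‖ ^ 2) ≤ t * (∑ j ∈ r, ‖d j‖ ^ 2) := by
    rw [Finset.mul_sum]
    refine Finset.sum_le_sum fun j hj => ?_
    have : hS.eigenvalues j ≤ t := le_of_not_gt (by simpa [hr] using hj)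
    exact mul_le_mul_of_nonneg_right this (by positivity)
  have hcomp : (∑ i ∈ s, hA.eigenvalues i * ‖c i‖ ^ 2) ≤
      ∑ j ∈ r, hS.eigenvalues j * ‖d j‖ ^ 2 := by
    have h0 := hle.dotProduct_mulVec_nonneg x
    rw [sub_mulVec, dotProduct_sub] at h0
    have hA' : star x ⬝ᵥ A *ᵥ x = ((∑ i ∈ s, hA.eigenvalues i * ‖c i‖ ^ 2 : ℝ) : ℂ) := by
      rw [hcrep]; exact quad_expand hA s c
    have hS' : star x ⬝ᵥ S *ᵥ x = ((∑ j ∈ r, hS.eigenvalues j * ‖d j‖ ^ 2 : ℝ) : ℂ) := by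
      rw [hdrep]; exact quad_expand hS r d
    rw [hA', hS', ← Complex.ofReal_sub] at h0
    have := Complex.zero_le_real.mp h0
    linarith
  have : t * (∑ i ∈ s, ‖c i‖ ^ 2) = t * (∑ j ∈ r, ‖d j‖ ^ 2) := by rw [hNorm]
  linarith

/-! ### Sorting and counting -/

private lemma card_filter_comp_perm (π : Equiv.Perm (Fin n)) (p : Fin n → Prop)
    [DecidablePred p] :
    (Finset.univ.filter (fun i => p (π i))).card = (Finset.univ.filter p).card := by
  refine Finset.card_nbij (fun i => π i) (fun i hi => ?_) (fun i hi j hj hij => π.injective hij)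
    (fun j hj => ?_)
  · simp only [Finset.mem_coe, Finset.mem_filter, Finset.mem_univ, true_and] at hi ⊢; exact hi
  · simp only [Finset.coe_filter, Set.mem_setOf_eq, Finset.mem_univ, true_and,
      Set.mem_image] at hj ⊢
    exact ⟨π.symm j, by simpa using hj, by simp⟩

private lemma sorted_le_of_counts {a b : Fin n → ℝ} (ha : Monotone a) (hb : Monotone b)
    (hc : ∀ t, (Finset.univ.filter fun i => t < a i).card ≤
      (Finset.univ.filter fun i => t < b i).card) : ∀ k, a k ≤ b k := by
  intro k
  by_contra hk
  push_neg at hk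
  set t := b k with ht
  have h1 : Finset.Ici k ⊆ Finset.univ.filter fun i => t < a i := by
    intro i hi
    simp only [Finset.mem_Ici] at hi
    simp only [Finset.mem_filter, Finset.mem_univ, true_and]
    exact lt_of_lt_of_le hk (ha hi)
  have h2 : (Finset.univ.filter fun i => t < b i) ⊆ Finset.Ioi k := by
    intro i hi
    simp only [Finset.mem_filter, Finset.mem_univ, true_and] at hi
    simp only [Finset.mem_Ioi]
    by_contra hik
    push_neg at hik
    exact absurd (hb hik) (not_le.mpr hi)
  have c1 := Finset.card_le_card h1
  have c2 := Finset.card_le_card h2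
  rw [Fin.card_Ici] at c1
  rw [Fin.card_Ioi] at c2
  have := hc t
  have hkn : (k : ℕ) < n := k.2
  omega

private lemma prod_le_prod_of_counts {α σ : Fin n → ℝ}
    (hc : ∀ t, (Finset.univ.filter fun i => t < α i).card ≤
      (Finset.univ.filter fun i => t < σ i).card)
    {h : ℝ → ℝ} (hm : Monotone h) (h0 : ∀ x, 0 ≤ h x) :
    ∏ i, h (α i) ≤ ∏ i, h (σ i) := by
  have key : ∀ k, α (Tuple.sort α k) ≤ σ (Tuple.sort σ k) := by
    refine sorted_le_of_counts (Tuple.monotone_sort α) (Tuple.monotone_sort σ) fun t => ?_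
    rw [card_filter_comp_perm (Tuple.sort α) (fun i => t < α i),
      card_filter_comp_perm (Tuple.sort σ) (fun i => t < σ i)]
    exact hc t
  calc ∏ i, h (α i) = ∏ i, h (α (Tuple.sort α i)) :=
        (Equiv.prod_comp (Tuple.sort α) (fun i => h (α i))).symm
    _ ≤ ∏ i, h (σ (Tuple.sort σ i)) :=
        Finset.prod_le_prod (fun i _ => h0 _) (fun i _ => hm (key i))
    _ = ∏ i, h (σ i) := Equiv.prod_comp (Tuple.sort σ) (fun i => h (σ i))

private lemma amgm_root (hn : 0 < n) (x : Fin n → ℝ) (hx : ∀ i, 0 ≤ x i) :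
    (∏ i, x i) ^ (1/(n:ℝ)) ≤ (∑ i, x i) / n := by
  have hw : ∀ i ∈ (Finset.univ : Finset (Fin n)), (0:ℝ) ≤ 1/(n:ℝ) := fun i _ => by positivity
  have hw' : ∑ _i : Fin n, (1:ℝ)/(n:ℝ) = 1 := by
    simp [Finset.sum_const]
    field_simp
  have := Real.geom_mean_le_arith_mean_weighted Finset.univ (fun _ => 1/(n:ℝ)) x hw hw'
    (fun i _ => hx i)
  rw [Real.finset_prod_rpow Finset.univ x (fun i _ => hx i) (1/(n:ℝ))] at this
  calc (∏ i, x i) ^ (1/(n:ℝ)) ≤ ∑ i, (1/(n:ℝ)) * x i := this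
    _ = (∑ i, x i) / n := by rw [← Finset.mul_sum]; ring

/-! ### Scalar facts about `g` -/

private noncomputable def hfun (g : ℝ → ℝ) : ℝ → ℝ := fun t => if t ≤ 0 then 0 else g t / t

private lemma hfun_nonneg {g : ℝ → ℝ} (hg0 : ∀ x : ℝ, 0 ≤ x → 0 ≤ g x) :
    ∀ t, 0 ≤ hfun g t := by
  intro t
  unfold hfun
  split_ifs with ht
  · exact le_refl 0
  · exact div_nonneg (hg0 t (le_of_lt (not_le.mp ht))) (le_of_lt (not_le.mp ht))

private lemma hfun_mono {g : ℝ → ℝ} (hconv : ConvexOn ℝ (Set.Ici (0 : ℝ)) g)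
    (hg0 : ∀ x : ℝ, 0 ≤ x → 0 ≤ g x) (hg00 : g 0 = 0) : Monotone (hfun g) := by
  intro x y hxy
  unfold hfun
  split_ifs with hx hy hy
  · rfl
  · exact div_nonneg (hg0 y (le_of_lt (not_le.mp hy))) (le_of_lt (not_le.mp hy))
  · exact absurd (hxy.trans hy) hx
  · have hx' : 0 < x := not_le.mp hx
    have hy' : 0 < y := not_le.mp hy
    rcases eq_or_lt_of_le hxy with rfl | hlt
    · rfl
    · rw [div_le_div_iff₀ hx' hy']
      have key : g x ≤ (x / y) * g y := by
        have hxy1 : x/y ≤ 1 := by rw [div_le_one hy']; exact hxy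
        have h := hconv.2 (Set.mem_Ici.mpr (le_refl (0:ℝ))) (Set.mem_Ici.mpr (le_of_lt hy'))
          (show (0:ℝ) ≤ 1 - x/y by linarith) (show (0:ℝ) ≤ x/y by positivity)
          (show (1 - x/y) + x/y = 1 by ring)
        have harg : (1 - x/y) • (0:ℝ) + (x/y) • y = x := by
          rw [smul_zero, zero_add, smul_eq_mul, div_mul_cancel₀ _ (ne_of_gt hy')]
        rw [harg, hg00, smul_eq_mul, smul_eq_mul, mul_zero, zero_add] at h
        exact h
      calc g x * y ≤ ((x/y) * g y) * y := mul_le_mul_of_nonneg_right key (le_of_lt hy')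
        _ = g y * x := by field_simp

private lemma hfun_mul {g : ℝ → ℝ} (hg00 : g 0 = 0) {t : ℝ} (ht : 0 ≤ t) :
    t * hfun g t = g t := by
  unfold hfun
  rcases eq_or_lt_of_le ht with rfl | ht'
  · simp [hg00]
  · rw [if_neg (not_le.mpr ht')]
    field_simp

/-! ### Matrix facts -/

private lemma psd_posdef {A : Matrix (Fin n) (Fin n) ℂ} (hA : A.PosSemidef) (hd : A.det ≠ 0) :
    A.PosDef := by
  refine PosDef.of_dotProduct_mulVec_pos hA.1 fun x hx => ?_
  have hmv : A *ᵥ x ≠ 0 := by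
    intro h
    apply hx
    have : A⁻¹ *ᵥ (A *ᵥ x) = x := by
      rw [mulVec_mulVec, nonsing_inv_mul A (isUnit_iff_ne_zero.mpr hd), one_mulVec]
    rw [h, mulVec_zero] at this
    exact this.symm
  have h0 : star x ⬝ᵥ A *ᵥ x ≠ 0 := fun h => hmv ((hA.dotProduct_mulVec_zero_iff x).mp h)
  exact lt_of_le_of_ne (hA.dotProduct_mulVec_nonneg x) (Ne.symm h0)

private lemma trace_eq' {A : Matrix (Fin n) (Fin n) ℂ} (hA : A.IsHermitian) :
    A.trace = ((∑ i, hA.eigenvalues i : ℝ) : ℂ) := by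
  conv_lhs => rw [hA.spectral_theorem, Unitary.conjStarAlgAut_apply]
  rw [trace_mul_cycle]
  simp [Matrix.trace_diagonal, Function.comp]

private lemma det_cfc {A : Matrix (Fin n) (Fin n) ℂ} (hA : A.IsHermitian) (g : ℝ → ℝ) :
    (cfc g A).det = ((∏ i, g (hA.eigenvalues i) : ℝ) : ℂ) := by
  rw [hA.cfc_eq g, Matrix.IsHermitian.cfc, Unitary.conjStarAlgAut_apply]
  rw [det_mul_right_comm]
  simp [Function.comp]

private lemma det_eq_prod' {A : Matrix (Fin n) (Fin n) ℂ} (hA : A.IsHermitian) :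
    A.det = ((∏ i, hA.eigenvalues i : ℝ) : ℂ) := by
  rw [hA.det_eq_prod_eigenvalues]
  push_cast
  rfl

end Helpers

/-- **Minkowski-type determinantal inequality for convex functions
(Bourin–Lee).** For `g : [0,∞) → [0,∞)` convex with `g(0) = 0` and positive
semidefinite `A, B ∈ M_n(ℂ)` (`n > 0`),
`det^{1/n} g(A+B) ≥ det^{1/n} g(A) + det^{1/n} g(B)`. -/
theorem det_root_convex_superadditive {n : ℕ} (hn : 0 < n)
    {A B : Matrix (Fin n) (Fin n) ℂ} (hA : A.PosSemidef) (hB : B.PosSemidef)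
    (g : ℝ → ℝ) (hconv : ConvexOn ℝ (Set.Ici (0 : ℝ)) g)
    (hg0 : ∀ x : ℝ, 0 ≤ x → 0 ≤ g x) (hg00 : g 0 = 0) :
    (cfc g A).det.re ^ (1 / (n : ℝ)) + (cfc g B).det.re ^ (1 / (n : ℝ)) ≤
      (cfc g (A + B)).det.re ^ (1 / (n : ℝ)) := by
  have hS : (A + B).PosSemidef := hA.add hB
  have hAH := hA.1
  have hBH := hB.1
  have hSH := hS.1
  rw [det_cfc hAH g, det_cfc hBH g, det_cfc hSH g]
  simp only [Complex.ofReal_re]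
  set Pa := ∏ i, g (hAH.eigenvalues i) with hPa
  set Pb := ∏ i, g (hBH.eigenvalues i) with hPb
  set Ps := ∏ i, g (hSH.eigenvalues i) with hPs
  have hPa0 : 0 ≤ Pa := Finset.prod_nonneg fun i _ => hg0 _ (hA.eigenvalues_nonneg i)
  have hPb0 : 0 ≤ Pb := Finset.prod_nonneg fun i _ => hg0 _ (hB.eigenvalues_nonneg i)
  have hPs0 : 0 ≤ Ps := Finset.prod_nonneg fun i _ => hg0 _ (hS.eigenvalues_nonneg i)
  have hinv : (1:ℝ)/(n:ℝ) ≠ 0 := by positivity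
  by_cases hdet : (A + B).det = 0
  · -- degenerate case: both sides of the sum vanish
    have hAz : ∃ i, hAH.eigenvalues i = 0 := by
      by_contra hno
      push_neg at hno
      have hdA : A.det ≠ 0 := by
        rw [det_eq_prod' hAH]
        simp only [ne_eq, Complex.ofReal_eq_zero]
        exact Finset.prod_ne_zero_iff.mpr fun i _ => hno i
      have hApd : A.PosDef := psd_posdef hA hdA
      have : (A + B).PosDef := hApd.add_posSemidef hB
      exact this.det_pos.ne' hdet
    have hBz : ∃ i, hBH.eigenvalues i = 0 := by
      by_contra hno
      push_neg at hno
      have hdB : B.det ≠ 0 := by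
        rw [det_eq_prod' hBH]
        simp only [ne_eq, Complex.ofReal_eq_zero]
        exact Finset.prod_ne_zero_iff.mpr fun i _ => hno i
      have hBpd : B.PosDef := psd_posdef hB hdB
      have : (A + B).PosDef := by
        rw [add_comm]
        exact hBpd.add_posSemidef hA
      exact this.det_pos.ne' hdet
    obtain ⟨ia, hia⟩ := hAz
    obtain ⟨ib, hib⟩ := hBz
    have hPaz : Pa = 0 := Finset.prod_eq_zero (Finset.mem_univ ia) (by rw [hia, hg00])
    have hPbz : Pb = 0 := Finset.prod_eq_zero (Finset.mem_univ ib) (by rw [hib, hg00])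
    rw [hPaz, hPbz, Real.zero_rpow hinv]
    simpa using Real.rpow_nonneg hPs0 _
  · -- main case: A + B is positive definite
    have hSpd : (A + B).PosDef := psd_posdef hS hdet
    open scoped MatrixOrder in
    set R := CFC.sqrt (A + B) with hRdef
    open scoped MatrixOrder in
    have hR : R.PosSemidef := nonneg_iff_posSemidef.mp (CFC.sqrt_nonneg _)
    have hRH := hR.1
    open scoped MatrixOrder in
    have hRR : R * R = A + B := CFC.sqrt_mul_sqrt_self (A + B) (nonneg_iff_posSemidef.mpr hS)
    have hdetR : R.det ≠ 0 := by
      intro h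
      apply hdet
      rw [← hRR, det_mul, h, zero_mul]
    have hu : IsUnit R.det := isUnit_iff_ne_zero.mpr hdetR
    have hRinvH : R⁻¹.IsHermitian := by
      rw [Matrix.IsHermitian, conjTranspose_nonsing_inv, hRH.eq]
    set X := R⁻¹ * A * R⁻¹ with hXdef
    set Y := R⁻¹ * B * R⁻¹ with hYdef
    have hX : X.PosSemidef := by
      have := hA.conjTranspose_mul_mul_same (B := R⁻¹)
      rwa [hRinvH.eq] at this
    have hY : Y.PosSemidef := by
      have := hB.conjTranspose_mul_mul_same (B := R⁻¹)
      rwa [hRinvH.eq] at this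
    have hXY : X + Y = 1 := by
      have h1 : X + Y = R⁻¹ * (A + B) * R⁻¹ := by
        rw [hXdef, hYdef, mul_add, add_mul]
      rw [h1, ← hRR, ← mul_assoc R⁻¹ R R, nonsing_inv_mul R hu, one_mul,
        mul_nonsing_inv R hu]
    have hXH := hX.1
    have hYH := hY.1
    -- determinant identities
    have hdetX : (A + B).det * X.det = A.det := by
      rw [hXdef, det_mul, det_mul, det_nonsing_inv, ← hRR, det_mul, Ring.inverse_eq_inv']
      field_simp
    have hdetY : (A + B).det * Y.det = B.det := by
      rw [hYdef, det_mul, det_mul, det_nonsing_inv, ← hRR, det_mul, Ring.inverse_eq_inv']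
      field_simp
    have hrealX : (∏ i, hSH.eigenvalues i) * (∏ i, hXH.eigenvalues i)
        = ∏ i, hAH.eigenvalues i := by
      have := hdetX
      rw [det_eq_prod' hAH, det_eq_prod' hSH, det_eq_prod' hXH, ← Complex.ofReal_mul] at this
      exact_mod_cast this
    have hrealY : (∏ i, hSH.eigenvalues i) * (∏ i, hYH.eigenvalues i)
        = ∏ i, hBH.eigenvalues i := by
      have := hdetY
      rw [det_eq_prod' hBH, det_eq_prod' hSH, det_eq_prod' hYH, ← Complex.ofReal_mul] at this
      exact_mod_cast this
    -- the eigenvalue-count comparisons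
    have hcountA : ∀ t, (Finset.univ.filter fun i => t < hAH.eigenvalues i).card ≤
        (Finset.univ.filter fun i => t < hSH.eigenvalues i).card := by
      intro t
      exact count_lt_le hAH hSH (by rw [add_sub_cancel_left]; exact hB) t
    have hcountB : ∀ t, (Finset.univ.filter fun i => t < hBH.eigenvalues i).card ≤
        (Finset.univ.filter fun i => t < hSH.eigenvalues i).card := by
      intro t
      refine count_lt_le hBH hSH ?_ t
      have h' : A + B - B = A := add_sub_cancel_right A B
      rw [h']
      exact hA
    have hmono := hfun_mono hconv hg0 hg00
    have hnn := hfun_nonneg hg0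
    -- claim 1 : Pa ≤ (∏ xe) * Ps
    have claim1 : Pa ≤ (∏ i, hXH.eigenvalues i) * Ps := by
      have e1 : Pa = (∏ i, hAH.eigenvalues i) * ∏ i, hfun g (hAH.eigenvalues i) := by
        rw [hPa, ← Finset.prod_mul_distrib]
        exact Finset.prod_congr rfl fun i _ =>
          (hfun_mul hg00 (hA.eigenvalues_nonneg i)).symm
      have e2 : Ps = (∏ i, hSH.eigenvalues i) * ∏ i, hfun g (hSH.eigenvalues i) := by
        rw [hPs, ← Finset.prod_mul_distrib]
        exact Finset.prod_congr rfl fun i _ =>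
          (hfun_mul hg00 (hS.eigenvalues_nonneg i)).symm
      rw [e1, e2]
      have hstep : ∏ i, hfun g (hAH.eigenvalues i) ≤ ∏ i, hfun g (hSH.eigenvalues i) :=
        prod_le_prod_of_counts hcountA hmono hnn
      calc (∏ i, hAH.eigenvalues i) * ∏ i, hfun g (hAH.eigenvalues i)
          ≤ (∏ i, hAH.eigenvalues i) * ∏ i, hfun g (hSH.eigenvalues i) :=
            mul_le_mul_of_nonneg_left hstep
              (Finset.prod_nonneg fun i _ => hA.eigenvalues_nonneg i)
        _ = (∏ i, hXH.eigenvalues i) *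
            ((∏ i, hSH.eigenvalues i) * ∏ i, hfun g (hSH.eigenvalues i)) := by
            rw [← hrealX]; ring
    have claim2 : Pb ≤ (∏ i, hYH.eigenvalues i) * Ps := by
      have e1 : Pb = (∏ i, hBH.eigenvalues i) * ∏ i, hfun g (hBH.eigenvalues i) := by
        rw [hPb, ← Finset.prod_mul_distrib]
        exact Finset.prod_congr rfl fun i _ =>
          (hfun_mul hg00 (hB.eigenvalues_nonneg i)).symm
      have e2 : Ps = (∏ i, hSH.eigenvalues i) * ∏ i, hfun g (hSH.eigenvalues i) := by
        rw [hPs, ← Finset.prod_mul_distrib]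
        exact Finset.prod_congr rfl fun i _ =>
          (hfun_mul hg00 (hS.eigenvalues_nonneg i)).symm
      rw [e1, e2]
      have hstep : ∏ i, hfun g (hBH.eigenvalues i) ≤ ∏ i, hfun g (hSH.eigenvalues i) :=
        prod_le_prod_of_counts hcountB hmono hnn
      calc (∏ i, hBH.eigenvalues i) * ∏ i, hfun g (hBH.eigenvalues i)
          ≤ (∏ i, hBH.eigenvalues i) * ∏ i, hfun g (hSH.eigenvalues i) :=
            mul_le_mul_of_nonneg_left hstep
              (Finset.prod_nonneg fun i _ => hB.eigenvalues_nonneg i)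
        _ = (∏ i, hYH.eigenvalues i) *
            ((∏ i, hSH.eigenvalues i) * ∏ i, hfun g (hSH.eigenvalues i)) := by
            rw [← hrealY]; ring
    -- claim 3 : (∏ xe)^(1/n) + (∏ ye)^(1/n) ≤ 1
    have htraceXY : (∑ i, hXH.eigenvalues i) + (∑ i, hYH.eigenvalues i) = n := by
      have h1 : X.trace + Y.trace = (n : ℂ) := by
        rw [← trace_add, hXY, trace_one]
        simp
      rw [trace_eq' hXH, trace_eq' hYH, ← Complex.ofReal_add] at h1
      exact_mod_cast h1
    have hxe0 : ∀ i, 0 ≤ hXH.eigenvalues i := fun i => hX.eigenvalues_nonneg i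
    have hye0 : ∀ i, 0 ≤ hYH.eigenvalues i := fun i => hY.eigenvalues_nonneg i
    have claim3 : (∏ i, hXH.eigenvalues i) ^ ((1:ℝ)/(n:ℝ))
        + (∏ i, hYH.eigenvalues i) ^ ((1:ℝ)/(n:ℝ)) ≤ 1 := by
      have h1 := amgm_root hn _ hxe0
      have h2 := amgm_root hn _ hye0
      have h3 : (∑ i, hXH.eigenvalues i) / n + (∑ i, hYH.eigenvalues i) / n = 1 := by
        rw [← add_div, htraceXY]
        field_simp
      linarith
    -- final assembly
    have hxp0 : 0 ≤ ∏ i, hXH.eigenvalues i := Finset.prod_nonneg fun i _ => hxe0 i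
    have hyp0 : 0 ≤ ∏ i, hYH.eigenvalues i := Finset.prod_nonneg fun i _ => hye0 i
    have f1 : Pa ^ ((1:ℝ)/(n:ℝ)) ≤ (∏ i, hXH.eigenvalues i) ^ ((1:ℝ)/(n:ℝ))
        * Ps ^ ((1:ℝ)/(n:ℝ)) := by
      rw [← Real.mul_rpow hxp0 hPs0]
      exact Real.rpow_le_rpow hPa0 claim1 (by positivity)
    have f2 : Pb ^ ((1:ℝ)/(n:ℝ)) ≤ (∏ i, hYH.eigenvalues i) ^ ((1:ℝ)/(n:ℝ))
        * Ps ^ ((1:ℝ)/(n:ℝ)) := by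
      rw [← Real.mul_rpow hyp0 hPs0]
      exact Real.rpow_le_rpow hPb0 claim2 (by positivity)
    have hPsr : 0 ≤ Ps ^ ((1:ℝ)/(n:ℝ)) := Real.rpow_nonneg hPs0 _
    calc Pa ^ ((1:ℝ)/(n:ℝ)) + Pb ^ ((1:ℝ)/(n:ℝ))
        ≤ ((∏ i, hXH.eigenvalues i) ^ ((1:ℝ)/(n:ℝ))
          + (∏ i, hYH.eigenvalues i) ^ ((1:ℝ)/(n:ℝ))) * Ps ^ ((1:ℝ)/(n:ℝ)) := by
          rw [add_mul]
          exact add_le_add f1 f2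
      _ ≤ 1 * Ps ^ ((1:ℝ)/(n:ℝ)) := mul_le_mul_of_nonneg_right claim3 hPsr
      _ = Ps ^ ((1:ℝ)/(n:ℝ)) := one_mul _
end

section
/- Let A, B be n×n Hermitian matrices and X, Y ∈ M_n(ℂ) with X*X + Y*Y = XX* + YY* = I. Then (X*AX + Y*BY) ⊕ (Y*AY + X*BX) is majorized by A ⊕ B; that is, for every k ≤ 2n the sum of the k largest eigenvalues of (X*AX+Y*BY) ⊕ (Y*AY+X*BX) is at most that of A ⊕ B, with equality of traces. -/
open Matrix ComplexOrder

/-- Eigenvalues of a Hermitian matrix (junk value `0` otherwise). -/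
noncomputable def herEigs {ι : Type*} [Fintype ι] [DecidableEq ι]
    (M : Matrix ι ι ℂ) : ι → ℝ :=
  if h : M.IsHermitian then h.eigenvalues else 0

/-- Sum of the `k` largest values of `f` (the maximum of `Σ_{i ∈ s} f i` over
subsets `s` of cardinality `k`). -/
noncomputable def kLargestSum {ι : Type*} [Fintype ι] (f : ι → ℝ) (k : ℕ) : ℝ :=
  sSup ((fun s : Finset ι => ∑ i ∈ s, f i) '' {s | s.card = k})

lemma kLS_bddAbove {ι : Type*} [Fintype ι] (f : ι → ℝ) (k : ℕ) :
    BddAbove ((fun s : Finset ι => ∑ i ∈ s, f i) '' {s | s.card = k}) :=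
  (Set.toFinite _).image _ |>.bddAbove

lemma sum_le_kLS {ι : Type*} [Fintype ι] (f : ι → ℝ) {k : ℕ} {s : Finset ι}
    (hs : s.card = k) : ∑ i ∈ s, f i ≤ kLargestSum f k :=
  le_csSup (kLS_bddAbove f k) ⟨s, hs, rfl⟩

lemma sum_mul_le_kLargestSum {ι : Type*} [Fintype ι] (lam t : ι → ℝ) (k : ℕ)
    (hk : k ≤ Fintype.card ι) (ht0 : ∀ i, 0 ≤ t i) (ht1 : ∀ i, t i ≤ 1)
    (hts : ∑ i, t i = k) : ∑ i, t i * lam i ≤ kLargestSum lam k := by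
  classical
  obtain ⟨S₀, -, hS₀⟩ := Finset.exists_subset_card_eq (Finset.card_univ (α := ι) ▸ hk)
  have hne : (Finset.univ.powersetCard k).Nonempty :=
    ⟨S₀, by simp [Finset.mem_powersetCard_univ, hS₀]⟩
  obtain ⟨S, hSmem, hSmax⟩ := Finset.exists_max_image _ (fun T : Finset ι => ∑ i ∈ T, lam i) hne
  have hScard : S.card = k := (Finset.mem_powersetCard_univ).mp hSmem
  refine le_trans ?_ (sum_le_kLS lam hScard)
  -- swap property
  have hswap : ∀ i ∈ S, ∀ j, j ∉ S → lam j ≤ lam i := by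
    intro i hi j hj
    have hji : j ≠ i := fun h => hj (h ▸ hi)
    have hT : (insert j (S.erase i)).card = k := by
      rw [Finset.card_insert_of_notMem (by simp [hji, hj]),
        Finset.card_erase_of_mem hi, hScard]
      have : 1 ≤ k := hScard ▸ Finset.card_pos.mpr ⟨i, hi⟩
      omega
    have := hSmax _ ((Finset.mem_powersetCard_univ).mpr hT)
    rw [Finset.sum_insert (by simp [hji, hj]), Finset.sum_erase_eq_sub hi] at this
    linarith
  rcases Nat.eq_zero_or_pos k with hk0 | hkpos
  · have ht : ∀ i ∈ Finset.univ, t i = 0 :=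
      (Finset.sum_eq_zero_iff_of_nonneg (fun i _ => ht0 i)).mp (by rw [hts, hk0]; norm_num)
    have hSe : S = ∅ := Finset.card_eq_zero.mp (hScard.trans hk0)
    rw [Finset.sum_congr rfl (fun i hi => by rw [ht i hi, zero_mul]), hSe]
    simp
  · have hSne : S.Nonempty := Finset.card_pos.mp (hScard ▸ hkpos)
    obtain ⟨i₀, hi₀, hmin⟩ := S.exists_min_image lam hSne
    set c := lam i₀ with hc
    set e : ι → ℝ := fun i => if i ∈ S then 1 else 0 with he
    have hse : ∑ i, e i = k := by
      simp only [he, Finset.sum_ite_mem, Finset.univ_inter, Finset.sum_const, hScard]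
      simp
    have hSsum : ∑ i ∈ S, lam i = ∑ i, e i * lam i := by
      simp [he, ite_mul, Finset.sum_ite_mem]
    rw [hSsum]
    have key : ∑ i, (lam i - c) * (t i - e i) ≤ 0 := by
      apply Finset.sum_nonpos
      intro i _
      by_cases hiS : i ∈ S
      · have h1 : c ≤ lam i := hmin i hiS
        have h2 : t i - e i ≤ 0 := by simp [he, hiS]; linarith [ht1 i]
        exact mul_nonpos_of_nonneg_of_nonpos (by linarith) h2
      · have h1 : lam i ≤ c := hswap i₀ hi₀ i hiS
        have h2 : 0 ≤ t i - e i := by simp [he, hiS]; exact ht0 i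
        exact mul_nonpos_of_nonpos_of_nonneg (by linarith) h2
    have expand : ∑ i, t i * lam i - ∑ i, e i * lam i
        = (∑ i, (lam i - c) * (t i - e i)) + c * ((∑ i, t i) - ∑ i, e i) := by
      simp only [Finset.mul_sum, ← Finset.sum_sub_distrib, ← Finset.sum_add_distrib]
      exact Finset.sum_congr rfl (fun i _ => by ring)
    rw [hts, hse, sub_self, mul_zero, add_zero] at expand
    linarith

lemma diag_re_nonneg {ι : Type*} [Fintype ι] [DecidableEq ι] {R : Matrix ι ι ℂ}
    (hR : R.PosSemidef) (i : ι) : 0 ≤ (R i i).re := by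
  have := hR.re_dotProduct_nonneg (Pi.single i 1)
  simpa [dotProduct, mulVec, Pi.single_apply, Finset.sum_ite_eq] using this

lemma trace_mul_le {ι : Type*} [Fintype ι] [DecidableEq ι] {M Q : Matrix ι ι ℂ}
    (hM : M.IsHermitian) (hQ : Q.PosSemidef) (hQ1 : (1 - Q).PosSemidef)
    (k : ℕ) (hk : k ≤ Fintype.card ι) (htr : Q.trace = (k : ℂ)) :
    ((Q * M).trace).re ≤ kLargestSum (herEigs M) k := by
  classical
  set U : Matrix ι ι ℂ := (hM.eigenvectorUnitary : Matrix ι ι ℂ) with hUdef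
  have hUU : star U * U = 1 := hM.eigenvectorUnitary.prop.1
  have hUU' : U * star U = 1 := hM.eigenvectorUnitary.prop.2
  set D : Matrix ι ι ℂ := diagonal (fun i => (hM.eigenvalues i : ℂ)) with hDdef
  set R := star U * Q * U with hRdef
  have hRpsd : R.PosSemidef := by
    rw [hRdef, Matrix.star_eq_conjTranspose]
    exact hQ.conjTranspose_mul_mul_same U
  have hR1psd : (1 - R).PosSemidef := by
    have h : 1 - R = Uᴴ * (1 - Q) * U := by
      rw [mul_sub, mul_one, sub_mul, ← Matrix.star_eq_conjTranspose, hUU, hRdef]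
    rw [h]; exact hQ1.conjTranspose_mul_mul_same U
  have hQM : (Q * M).trace = (R * D).trace := by
    have h1 : Q * M = (Q * U * D) * star U := by
      conv_lhs => rw [hM.spectral_theorem, Unitary.conjStarAlgAut_apply]
      have hco : (RCLike.ofReal ∘ hM.eigenvalues : ι → ℂ) = fun i => (hM.eigenvalues i : ℂ) := rfl
      rw [hco]
      simp only [← hUdef, ← hDdef]
      noncomm_ring
    rw [h1, trace_mul_comm, hRdef]
    congr 1
    noncomm_ring
  have hRD : (R * D).trace = ∑ i, R i i * (hM.eigenvalues i : ℂ) := by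
    simp [Matrix.trace, Matrix.diag, hDdef, Matrix.mul_diagonal]
  have htr' : ∑ i, (R i i).re = (k : ℝ) := by
    have h1 : R.trace = Q.trace := by
      rw [hRdef, trace_mul_comm, ← mul_assoc, hUU', one_mul]
    have h2 : R.trace = ∑ i, R i i := by simp [Matrix.trace, Matrix.diag]
    have := congrArg Complex.re (h2 ▸ (h1.trans htr))
    simpa [Complex.re_sum] using this
  have heig : herEigs M = hM.eigenvalues := by rw [herEigs, dif_pos hM]
  rw [hQM, hRD, heig]
  have : (∑ i, R i i * (hM.eigenvalues i : ℂ)).re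
      = ∑ i, (R i i).re * hM.eigenvalues i := by
    rw [Complex.re_sum]
    exact Finset.sum_congr rfl fun i _ => by simp [Complex.mul_re]
  rw [this]
  exact sum_mul_le_kLargestSum _ _ k hk (fun i => diag_re_nonneg hRpsd i)
    (fun i => by have := diag_re_nonneg hR1psd i; simp [Matrix.sub_apply] at this; linarith)
    htr'

lemma channel_majorization {ι : Type*} [Fintype ι] [DecidableEq ι]
    {M V₁ V₂ : Matrix ι ι ℂ} (hM : M.IsHermitian)
    (hv1 : V₁ᴴ * V₁ + V₂ᴴ * V₂ = 1) (hv2 : V₁ * V₁ᴴ + V₂ * V₂ᴴ = 1)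
    (k : ℕ) (hk : k ≤ Fintype.card ι) :
    kLargestSum (herEigs (V₁ᴴ * M * V₁ + V₂ᴴ * M * V₂)) k ≤ kLargestSum (herEigs M) k := by
  classical
  have hH : (V₁ᴴ * M * V₁ + V₂ᴴ * M * V₂).IsHermitian :=
    (isHermitian_conjTranspose_mul_mul V₁ hM).add (isHermitian_conjTranspose_mul_mul V₂ hM)
  have heig : herEigs (V₁ᴴ * M * V₁ + V₂ᴴ * M * V₂) = hH.eigenvalues := dif_pos hH
  refine csSup_le ?_ ?_
  · obtain ⟨s, -, hs⟩ := Finset.exists_subset_card_eq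
      ((Finset.card_univ (α := ι)) ▸ hk)
    exact ⟨_, ⟨s, hs, rfl⟩⟩
  rintro x ⟨s, hs, rfl⟩
  simp only [Set.mem_setOf_eq] at hs
  rw [heig]
  show ∑ i ∈ s, hH.eigenvalues i ≤ kLargestSum (herEigs M) k
  have main : ∀ (lam : ι → ℝ) (U : Matrix ι ι ℂ), star U * U = 1 → U * star U = 1 →
      V₁ᴴ * M * V₁ + V₂ᴴ * M * V₂ = U * diagonal (fun i => (lam i : ℂ)) * star U →
      ∑ i ∈ s, lam i ≤ kLargestSum (herEigs M) k := by
    intro lam U hUU hUU' hspec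
    set e : ι → ℂ := fun i => if i ∈ s then 1 else 0 with hedef
    set E : Matrix ι ι ℂ := diagonal e with hEdef
    set D : Matrix ι ι ℂ := diagonal (fun i => (lam i : ℂ)) with hDdef
    set P : Matrix ι ι ℂ := U * E * star U with hPdef
    have hEpsd : E.PosSemidef := by
      refine PosSemidef.diagonal fun i => ?_
      by_cases h : i ∈ s <;> simp [hedef, h]
    have hE1psd : ((1 : Matrix ι ι ℂ) - E).PosSemidef := by
      have h : (1 : Matrix ι ι ℂ) - E = diagonal (fun i => 1 - e i) := by
        rw [hEdef, ← diagonal_one, diagonal_sub]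
      rw [h]
      refine PosSemidef.diagonal fun i => ?_
      by_cases h : i ∈ s <;> simp [hedef, h]
    have hPpsd : P.PosSemidef := by
      rw [hPdef, Matrix.star_eq_conjTranspose]
      exact hEpsd.mul_mul_conjTranspose_same U
    have h1P : (1 : Matrix ι ι ℂ) - P = U * (1 - E) * star U := by
      rw [mul_sub, mul_one, sub_mul, hUU', hPdef]
    have h1Ppsd : ((1 : Matrix ι ι ℂ) - P).PosSemidef := by
      rw [h1P, Matrix.star_eq_conjTranspose]
      exact hE1psd.mul_mul_conjTranspose_same U
    have htrP : P.trace = ((s.card : ℕ) : ℂ) := by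
      rw [hPdef, trace_mul_comm, ← mul_assoc, hUU, one_mul, hEdef, trace_diagonal, hedef]
      simp [Finset.sum_ite_mem]
    set Q : Matrix ι ι ℂ := V₁ * P * V₁ᴴ + V₂ * P * V₂ᴴ with hQdef
    have hQpsd : Q.PosSemidef :=
      (hPpsd.mul_mul_conjTranspose_same V₁).add (hPpsd.mul_mul_conjTranspose_same V₂)
    have h1Q : (1 : Matrix ι ι ℂ) - Q = V₁ * (1 - P) * V₁ᴴ + V₂ * (1 - P) * V₂ᴴ := by
      have h : V₁ * (1 - P) * V₁ᴴ + V₂ * (1 - P) * V₂ᴴ = (V₁ * V₁ᴴ + V₂ * V₂ᴴ) - Q := by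
        rw [hQdef]; noncomm_ring
      rw [h, hv2]
    have h1Qpsd : ((1 : Matrix ι ι ℂ) - Q).PosSemidef := by
      rw [h1Q]
      exact (h1Ppsd.mul_mul_conjTranspose_same V₁).add (h1Ppsd.mul_mul_conjTranspose_same V₂)
    have htrQ : Q.trace = ((s.card : ℕ) : ℂ) := by
      rw [hQdef, trace_add, trace_mul_comm (V₁ * P) V₁ᴴ, trace_mul_comm (V₂ * P) V₂ᴴ,
        ← trace_add]
      have h : V₁ᴴ * (V₁ * P) + V₂ᴴ * (V₂ * P) = (V₁ᴴ * V₁ + V₂ᴴ * V₂) * P := by noncomm_ring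
      rw [h, hv1, one_mul, htrP]
    have hQM : (Q * M).trace = ∑ i ∈ s, (lam i : ℂ) := by
      have h : Q * M = (V₁ * P) * (V₁ᴴ * M) + (V₂ * P) * (V₂ᴴ * M) := by
        rw [hQdef]; noncomm_ring
      rw [h, trace_add, trace_mul_comm (V₁ * P), trace_mul_comm (V₂ * P), ← trace_add]
      have h2 : V₁ᴴ * M * (V₁ * P) + V₂ᴴ * M * (V₂ * P)
          = (V₁ᴴ * M * V₁ + V₂ᴴ * M * V₂) * P := by noncomm_ring
      rw [h2, hspec, hPdef]
      have h3 : U * D * star U * (U * E * star U) = (U * (D * E)) * star U := by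
        rw [show U * D * star U * (U * E * star U)
            = U * (D * ((star U * U) * E)) * star U from by noncomm_ring, hUU]
        noncomm_ring
      rw [h3, trace_mul_comm, ← mul_assoc, hUU, one_mul, hEdef, hDdef,
        diagonal_mul_diagonal, trace_diagonal]
      simp [hedef, mul_ite, Finset.sum_ite_mem]
    have hre : ∑ i ∈ s, lam i = ((Q * M).trace).re := by
      rw [hQM, Complex.re_sum]
      simp
    rw [hre, ← hs]
    exact trace_mul_le hM hQpsd h1Qpsd s.card (hs ▸ hk) htrQ
  refine main hH.eigenvalues hH.eigenvectorUnitary hH.eigenvectorUnitary.prop.1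
    hH.eigenvectorUnitary.prop.2 ?_
  conv_lhs => rw [hH.spectral_theorem]
  rfl

lemma trace_fromBlocks' {ι : Type*} [Fintype ι]
    (A C D B : Matrix ι ι ℂ) :
    (Matrix.fromBlocks A C D B).trace = A.trace + B.trace := by
  simp [Matrix.trace, Matrix.diag, Fintype.sum_sum_type, Matrix.fromBlocks]

/-- **A majorization (Bourin–Lee).** If `A, B` are Hermitian and
`X*X + Y*Y = XX* + YY* = I`, then `(X*AX + Y*BY) ⊕ (Y*AY + X*BX) ≺ A ⊕ B`:
for every `k ≤ 2n` the sum of the `k` largest eigenvalues of the left-hand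
side is at most that of `A ⊕ B`, and the traces are equal. -/
theorem block_majorization {n : ℕ}
    {A B X Y : Matrix (Fin n) (Fin n) ℂ}
    (hA : A.IsHermitian) (hB : B.IsHermitian)
    (h1 : Xᴴ * X + Yᴴ * Y = 1) (h2 : X * Xᴴ + Y * Yᴴ = 1) :
    (∀ k : ℕ, k ≤ 2 * n →
      kLargestSum (herEigs (Matrix.fromBlocks (Xᴴ * A * X + Yᴴ * B * Y) 0 0
        (Yᴴ * A * Y + Xᴴ * B * X))) k ≤
      kLargestSum (herEigs (Matrix.fromBlocks A 0 0 B)) k) ∧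
    (Matrix.fromBlocks (Xᴴ * A * X + Yᴴ * B * Y) 0 0
        (Yᴴ * A * Y + Xᴴ * B * X)).trace = (Matrix.fromBlocks A 0 0 B).trace := by
  set M : Matrix (Fin n ⊕ Fin n) (Fin n ⊕ Fin n) ℂ := Matrix.fromBlocks A 0 0 B with hMdef
  set V₁ : Matrix (Fin n ⊕ Fin n) (Fin n ⊕ Fin n) ℂ := Matrix.fromBlocks X 0 0 X with hV₁def
  set V₂ : Matrix (Fin n ⊕ Fin n) (Fin n ⊕ Fin n) ℂ := Matrix.fromBlocks 0 Y Y 0 with hV₂def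
  have hM : M.IsHermitian := by
    rw [hMdef, Matrix.IsHermitian, fromBlocks_conjTranspose, hA.eq, hB.eq, conjTranspose_zero]
  have hv1 : V₁ᴴ * V₁ + V₂ᴴ * V₂ = 1 := by
    rw [hV₁def, hV₂def]
    simp only [fromBlocks_conjTranspose, conjTranspose_zero, fromBlocks_multiply,
      Matrix.mul_zero, Matrix.zero_mul, add_zero, zero_add, fromBlocks_add, h1,
      ← fromBlocks_one]
  have hv2 : V₁ * V₁ᴴ + V₂ * V₂ᴴ = 1 := by
    rw [hV₁def, hV₂def]
    simp only [fromBlocks_conjTranspose, conjTranspose_zero, fromBlocks_multiply,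
      Matrix.mul_zero, Matrix.zero_mul, add_zero, zero_add, fromBlocks_add, h2,
      ← fromBlocks_one]
  have hkey : V₁ᴴ * M * V₁ + V₂ᴴ * M * V₂
      = Matrix.fromBlocks (Xᴴ * A * X + Yᴴ * B * Y) 0 0 (Yᴴ * A * Y + Xᴴ * B * X) := by
    rw [hV₁def, hV₂def, hMdef]
    simp only [fromBlocks_conjTranspose, conjTranspose_zero, fromBlocks_multiply,
      Matrix.mul_zero, Matrix.zero_mul, add_zero, zero_add, fromBlocks_add]
    rw [add_comm (Xᴴ * B * X)]
  constructor
  · intro k hk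
    have hcard : k ≤ Fintype.card (Fin n ⊕ Fin n) := by
      simpa [Fintype.card_sum, two_mul] using hk
    rw [← hkey]
    exact channel_majorization hM hv1 hv2 k hcard
  · rw [trace_fromBlocks', trace_fromBlocks', trace_add, trace_add,
      trace_mul_cycle Xᴴ A X, trace_mul_cycle Yᴴ B Y,
      trace_mul_cycle Yᴴ A Y, trace_mul_cycle Xᴴ B X]
    have hA' : (X * Xᴴ * A).trace + (Y * Yᴴ * A).trace = A.trace := by
      rw [← trace_add, ← Matrix.add_mul, h2, Matrix.one_mul]
    have hB' : (X * Xᴴ * B).trace + (Y * Yᴴ * B).trace = B.trace := by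
      rw [← trace_add, ← Matrix.add_mul, h2, Matrix.one_mul]
    linear_combination hA' + hB'
end
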